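/- arXiv:2010.03981 — 3 statements merged into one kernel-verified Lean document; each statement's English description precedes it below -/
import Mathlib

section
/- Let T_1 and T_2 be trees of orders n_1 ≥ 2 and n_2 ≥ 2 respectively, let T be the tree obtained from T_1 and T_2 by adding an edge between a vertex u of T_1 and a vertex v of T_2, and let T' be the tree obtained from T by contracting the edge uv to the single vertex u and attaching a new pendent vertex v to u. Then T ≻ T'. -/
namespace TreeOrder

attribute [local instance] Classical.propDecidable

variable {V : Type*} {W : Type*}

/-- `side G u v` = number of vertices strictly closer to `u` than to `v`;
for an edge `uv` of a tree this is the order of the component of `T - uv` containing `u`. -/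
noncomputable def side [Fintype V] (G : SimpleGraph V) (u v : V) : ℕ :=
  (Finset.univ.filter fun w => G.dist w u < G.dist w v).card

/-- `mu G u v = min (n_u(e), n_v(e))` for the edge `e = uv`. -/
noncomputable def mu [Fintype V] (G : SimpleGraph V) (u v : V) : ℕ :=
  min (side G u v) (side G v u)

/-- `mu` as a function on unordered pairs. -/
noncomputable def muE [Fintype V] (G : SimpleGraph V) : Sym2 V → ℕ :=
  Sym2.lift ⟨fun u v => mu G u v, fun _ _ => min_comm _ _⟩

/-- `r G i` = number of edges `e` of `G` with `μ(e) = i`. -/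
noncomputable def r [Fintype V] (G : SimpleGraph V) (i : ℕ) : ℕ :=
  (Finset.univ.filter fun e : Sym2 V => e ∈ G.edgeSet ∧ muE G e = i).card

/-- `tailSum G n k = Σ_{i=k}^{⌊n/2⌋} r_i(G)`. -/
noncomputable def tailSum [Fintype V] (G : SimpleGraph V) (n k : ℕ) : ℕ :=
  ∑ i ∈ Finset.Icc k (n / 2), r G i

/-- The order `⪯` on trees with `n` vertices, via edge division vectors. -/
def Preceq [Fintype V] [Fintype W] (n : ℕ) (G : SimpleGraph V) (H : SimpleGraph W) : Prop :=
  ∀ k, 1 ≤ k → k ≤ n / 2 → tailSum G n k ≤ tailSum H n k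

/-- The strict order `≺`. -/
def Prec [Fintype V] [Fintype W] (n : ℕ) (G : SimpleGraph V) (H : SimpleGraph W) : Prop :=
  Preceq n G H ∧ ∃ k, 1 ≤ k ∧ k ≤ n / 2 ∧ tailSum G n k < tailSum H n k

/-- Equality of edge division vectors `r(G) = r(H)`. -/
def SameEdgeDivision [Fintype V] [Fintype W] (n : ℕ) (G : SimpleGraph V)
    (H : SimpleGraph W) : Prop :=
  ∀ i, 1 ≤ i → i ≤ n / 2 → r G i = r H i

/-- `u` is a centroidal vertex: `n_u(e) ≥ n/2` for every edge `e` incident to `u`. -/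
def IsCentroidal [Fintype V] (G : SimpleGraph V) (u : V) : Prop :=
  ∀ v, G.Adj u v → Fintype.card V ≤ 2 * side G u v

/-- `u` is a proper centroidal vertex: `n_u(e) > ⌈n/2⌉` for every edge `e` incident to `u`. -/
def IsProperCentroidal [Fintype V] (G : SimpleGraph V) (u : V) : Prop :=
  ∀ v, G.Adj u v → (Fintype.card V + 1) / 2 < side G u v

/-- The edge `uv` is a center edge: `μ(uv) = ⌊n/2⌋`. -/
def IsCenterEdge [Fintype V] (G : SimpleGraph V) (u v : V) : Prop :=
  G.Adj u v ∧ mu G u v = Fintype.card V / 2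

/-- degree of a vertex -/
noncomputable def deg [Fintype V] (G : SimpleGraph V) (v : V) : ℕ :=
  (Finset.univ.filter fun w => G.Adj v w).card

/-- The path `P_n` on `n` vertices. -/
def pathG (n : ℕ) : SimpleGraph (Fin n) :=
  SimpleGraph.fromRel fun x y => (x : ℕ) + 1 = y

/-- The star `S_n` on `n` vertices. -/
def starG (n : ℕ) : SimpleGraph (Fin n) :=
  SimpleGraph.fromRel fun x _ => (x : ℕ) = 0

/-- The double star path `CP_{n;a,b}` : a path on `n - a - b` vertices (at positions
`a, …, n - b - 1`) with `a` pendent vertices attached to its first vertex and `b`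
pendent vertices attached to its last vertex. -/
def doubleStar (n a b : ℕ) : SimpleGraph (Fin n) :=
  SimpleGraph.fromRel fun x y =>
    ((x : ℕ) < a ∧ (y : ℕ) = a) ∨
    (a ≤ (x : ℕ) ∧ (x : ℕ) + 1 = y ∧ (y : ℕ) < n - b) ∨
    ((x : ℕ) = n - b - 1 ∧ n - b ≤ (y : ℕ))

/-- `CP_{n,k}^s` : a path `v_1 ⋯ v_k` (at positions `0, …, k-1`) with all
`n - k` pendent vertices attached to `v_s` (position `s - 1`). -/
def cpOne (n k s : ℕ) : SimpleGraph (Fin n) :=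
  SimpleGraph.fromRel fun x y =>
    ((x : ℕ) + 1 = y ∧ (y : ℕ) < k) ∨ ((x : ℕ) = s - 1 ∧ k ≤ (y : ℕ))

/-- The caterpillar `CP(n; n_1, …, n_k)` : a path `v_1 ⋯ v_k` (at positions `0, …, k-1`),
where pendent vertex `j` (for `k ≤ j < n`) is attached to the path vertex at
position `f j` (so `n_i = |{j : f j = i - 1}|`). -/
def caterpillar (n k : ℕ) (f : ℕ → ℕ) : SimpleGraph (Fin n) :=
  SimpleGraph.fromRel fun x y =>
    ((x : ℕ) + 1 = y ∧ (y : ℕ) < k) ∨ (k ≤ (y : ℕ) ∧ (x : ℕ) = f y)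

/-- The balanced starlike tree `SP_{n,q}` : the center is vertex `0`, and vertex
`j ≥ 1` lies on branch `(j - 1) % q` at depth `(j - 1)/q + 1`; so the `q` branches are
paths whose orders pairwise differ by at most `1`. -/
def balancedStar (n q : ℕ) : SimpleGraph (Fin n) :=
  SimpleGraph.fromRel fun x y =>
    ((x : ℕ) = 0 ∧ 1 ≤ (y : ℕ) ∧ (y : ℕ) ≤ q) ∨ (1 ≤ (x : ℕ) ∧ (x : ℕ) + q = y)

/-- The edge-moving transformation of `G` w.r.t. the edge `uv`: contract `uv` to `u`
(moving all edges at `v` to `u`) and attach `v` to `u` as a pendent vertex. -/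
def edgeMove (G : SimpleGraph V) (u v : V) : SimpleGraph V :=
  SimpleGraph.fromRel fun x y =>
    (G.Adj x y ∧ x ≠ v ∧ y ≠ v) ∨ (x = u ∧ y = v) ∨ (x = u ∧ G.Adj v y ∧ y ≠ u)


section Proof12
open SimpleGraph Finset

noncomputable def comp [Fintype V] (H : SimpleGraph V) (a : V) : Finset V :=
  Finset.univ.filter fun w => H.Reachable w a

lemma mem_comp [Fintype V] {H : SimpleGraph V} {a w : V} :
    w ∈ comp H a ↔ H.Reachable w a := by simp [comp]

lemma reach_deleteEdges_iff {H : SimpleGraph V} {S : Set (Sym2 V)} {x y : V} :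
    (H.deleteEdges S).Reachable x y ↔ ∃ p : H.Walk x y, ∀ e ∈ p.edges, e ∉ S := by
  constructor
  · rintro ⟨p⟩
    refine ⟨p.map (SimpleGraph.Hom.ofLE (H.deleteEdges_le S)), ?_⟩
    intro e he
    rw [SimpleGraph.Walk.edges_map] at he
    obtain ⟨e', he', rfl⟩ := List.mem_map.mp he
    have h2 := p.edges_subset_edgeSet he'
    rw [edgeSet_deleteEdges] at h2
    simpa [Sym2.map_id'] using h2.2
  · rintro ⟨p, hp⟩
    exact ⟨p.transfer _ fun e he => by
      rw [edgeSet_deleteEdges]; exact ⟨p.edges_subset_edgeSet he, hp e he⟩⟩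

lemma del_comm (H : SimpleGraph V) (a b : V) :
    H.deleteEdges {s(a, b)} = H.deleteEdges {s(b, a)} := by
  rw [Sym2.eq_swap]


lemma reach_or_aux {H : SimpleGraph V} {a b : V} (hab : H.Adj a b) {w c : V} (p : H.Walk w c) :
    (H.deleteEdges {s(a,b)}).Reachable w c ∨ (H.deleteEdges {s(a,b)}).Reachable w a ∨
      (H.deleteEdges {s(a,b)}).Reachable w b := by
  induction p with
  | nil => exact Or.inl (Reachable.refl _)
  | @cons x z _ h p ih =>
    by_cases he : s(x, z) = s(a, b)
    · rw [Sym2.eq_iff] at he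
      rcases he with ⟨rfl, rfl⟩ | ⟨rfl, rfl⟩
      · exact Or.inr (Or.inl (Reachable.refl _))
      · exact Or.inr (Or.inr (Reachable.refl _))
    · have hadj : (H.deleteEdges {s(a,b)}).Adj x z := by
        rw [deleteEdges_adj]
        exact ⟨h, by simpa using he⟩
      rcases ih with h1 | h1 | h1
      · exact Or.inl (hadj.reachable.trans h1)
      · exact Or.inr (Or.inl (hadj.reachable.trans h1))
      · exact Or.inr (Or.inr (hadj.reachable.trans h1))

lemma reach_or {H : SimpleGraph V} {a b : V} (hc : H.Connected) (hab : H.Adj a b) (w : V) :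
    (H.deleteEdges {s(a,b)}).Reachable w a ∨ (H.deleteEdges {s(a,b)}).Reachable w b := by
  rcases reach_or_aux hab ((hc.preconnected w a).some) with h | h | h
  · exact Or.inl h
  · exact Or.inl h
  · exact Or.inr h

lemma not_both {H : SimpleGraph V} {a b w : V} (hbr : H.IsBridge s(a,b))
    (h1 : (H.deleteEdges {s(a,b)}).Reachable w a)
    (h2 : (H.deleteEdges {s(a,b)}).Reachable w b) : False :=
  (isBridge_iff.mp hbr) (h1.symm.trans h2)

lemma cross {H : SimpleGraph V} {a b w x : V} (hbr : H.IsBridge s(a,b))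
    (h1 : (H.deleteEdges {s(a,b)}).Reachable w a)
    (h2 : (H.deleteEdges {s(a,b)}).Reachable x b)
    (hadj : H.Adj w x) : w = a := by
  by_cases he : s(w, x) = s(a, b)
  · rw [Sym2.eq_iff] at he
    rcases he with ⟨rfl, rfl⟩ | ⟨rfl, rfl⟩
    · rfl
    · exact absurd (Reachable.refl _) (fun h => not_both hbr h1 h)
  · have hadj' : (H.deleteEdges {s(a,b)}).Adj w x := by
      rw [deleteEdges_adj]; exact ⟨hadj, by simpa using he⟩
    exact absurd (hadj'.reachable.trans h2) (fun h => not_both hbr h1 h)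

lemma dist_le_walk {H : SimpleGraph V} {a b : V} (hc : H.Connected)
    (hbr : H.IsBridge s(a,b)) (hab : H.Adj a b) {w c : V} (p : H.Walk w c) :
    (H.deleteEdges {s(a,b)}).Reachable w a → (H.deleteEdges {s(a,b)}).Reachable c b →
      H.dist w a + 1 ≤ p.length := by
  induction p with
  | nil => exact fun hw hb => (not_both hbr hw hb).elim
  | @cons x z _ h p ih =>
    intro hw hcb
    rcases reach_or hc hab z with hz | hz
    · have h1 := ih hz hcb
      have h2 : H.dist x z ≤ 1 := by
        simpa using H.dist_le (SimpleGraph.Walk.cons h SimpleGraph.Walk.nil)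
      have h3 := hc.dist_triangle (u := x) (v := z) (w := a)
      rw [SimpleGraph.Walk.length_cons]
      omega
    · have hxa : x = a := cross hbr hw hz h
      subst hxa
      rw [SimpleGraph.Walk.length_cons]
      simp [SimpleGraph.dist_self]

lemma dist_lt {H : SimpleGraph V} {a b w : V} (hc : H.Connected)
    (hbr : H.IsBridge s(a,b)) (hab : H.Adj a b)
    (hw : (H.deleteEdges {s(a,b)}).Reachable w a) : H.dist w a < H.dist w b := by
  obtain ⟨p, hp⟩ := hc.exists_walk_length_eq_dist w b
  have := dist_le_walk hc hbr hab p hw (Reachable.refl _)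
  omega



lemma bridge_comm {H : SimpleGraph V} {a b : V} (h : H.IsBridge s(a,b)) : H.IsBridge s(b,a) := by
  rwa [Sym2.eq_swap]

lemma side_eq [Fintype V] {H : SimpleGraph V} {a b : V} (hc : H.Connected)
    (hbr : H.IsBridge s(a,b)) (hab : H.Adj a b) :
    side H a b = (comp (H.deleteEdges {s(a,b)}) a).card := by
  unfold side
  congr 1
  ext w
  simp only [mem_filter, mem_comp, mem_univ, true_and]
  constructor
  · intro hlt
    rcases reach_or hc hab w with h | h
    · exact h
    · have h' : (H.deleteEdges {s(b,a)}).Reachable w b := by rwa [← del_comm]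
      have := dist_lt hc (bridge_comm hbr) hab.symm h'
      exact ((by omega : False)).elim
  · exact fun h => dist_lt hc hbr hab h

lemma comp_partition [Fintype V] {H : SimpleGraph V} {a b : V} (hc : H.Connected)
    (hbr : H.IsBridge s(a,b)) (hab : H.Adj a b) :
    (comp (H.deleteEdges {s(a,b)}) a).card + (comp (H.deleteEdges {s(a,b)}) b).card
      = Fintype.card V := by
  classical
  rw [← Finset.card_union_of_disjoint, ← Finset.card_univ]
  · congr 1
    ext w
    simp only [Finset.mem_union, mem_comp, mem_univ, iff_true]
    exact reach_or hc hab w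
  · rw [Finset.disjoint_left]
    intro w h1 h2
    exact not_both hbr (mem_comp.mp h1) (mem_comp.mp h2)

lemma mu_eq [Fintype V] {H : SimpleGraph V} {a b : V} (hc : H.Connected)
    (hbr : H.IsBridge s(a,b)) (hab : H.Adj a b) :
    mu H a b = min (comp (H.deleteEdges {s(a,b)}) a).card
      (comp (H.deleteEdges {s(a,b)}) b).card := by
  rw [mu, side_eq hc hbr hab, side_eq hc (bridge_comm hbr) hab.symm, ← del_comm]



noncomputable def phi (u v : V) : V → V := fun x => if x = v then u else x

lemma phi_v {u v : V} : phi u v v = u := if_pos rfl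

lemma phi_ne {u v x : V} (h : x ≠ v) : phi u v x = x := if_neg h

lemma adj_iff {G : SimpleGraph V} {u v : V} (huv : G.Adj u v) {x y : V} :
    (edgeMove G u v).Adj x y ↔
      (G.Adj x y ∧ x ≠ v ∧ y ≠ v) ∨ (x = u ∧ y = v) ∨ (x = v ∧ y = u) ∨
      (x = u ∧ G.Adj v y ∧ y ≠ u) ∨ (y = u ∧ G.Adj v x ∧ x ≠ u) := by
  rw [edgeMove, fromRel_adj]
  constructor
  · rintro ⟨hne, (⟨h1,h2,h3⟩|⟨rfl,rfl⟩|⟨rfl,h2,h3⟩) | (⟨h1,h2,h3⟩|⟨rfl,rfl⟩|⟨rfl,h2,h3⟩)⟩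
    · exact Or.inl ⟨h1,h2,h3⟩
    · exact Or.inr (Or.inl ⟨rfl,rfl⟩)
    · exact Or.inr (Or.inr (Or.inr (Or.inl ⟨rfl,h2,h3⟩)))
    · exact Or.inl ⟨h1.symm, h3, h2⟩
    · exact Or.inr (Or.inr (Or.inl ⟨rfl,rfl⟩))
    · exact Or.inr (Or.inr (Or.inr (Or.inr ⟨rfl,h2,h3⟩)))
  · rintro (⟨h1,h2,h3⟩|⟨rfl,rfl⟩|⟨rfl,rfl⟩|⟨rfl,h2,h3⟩|⟨rfl,h2,h3⟩)
    · exact ⟨h1.ne, Or.inl (Or.inl ⟨h1,h2,h3⟩)⟩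
    · exact ⟨huv.ne, Or.inl (Or.inr (Or.inl ⟨rfl,rfl⟩))⟩
    · exact ⟨huv.ne', Or.inr (Or.inr (Or.inl ⟨rfl,rfl⟩))⟩
    · exact ⟨Ne.symm h3, Or.inl (Or.inr (Or.inr ⟨rfl,h2,h3⟩))⟩
    · exact ⟨h3, Or.inr (Or.inr (Or.inr ⟨rfl,h2,h3⟩))⟩

lemma adj_uv {G : SimpleGraph V} {u v : V} (huv : G.Adj u v) : (edgeMove G u v).Adj u v :=
  (adj_iff huv).mpr (Or.inr (Or.inl ⟨rfl, rfl⟩))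

lemma v_adj {G : SimpleGraph V} {u v x : V} (huv : G.Adj u v)
    (h : (edgeMove G u v).Adj v x) : x = u := by
  rcases (adj_iff huv).mp h with ⟨_,h2,_⟩|⟨h1,_⟩|⟨_,rfl⟩|⟨h1,_⟩|⟨rfl,_,_⟩
  · exact absurd rfl h2
  · exact absurd h1 huv.ne'
  · rfl
  · exact absurd h1 huv.ne'
  · rfl

lemma no_triangle {G : SimpleGraph V} (hT : G.IsTree) {u v b : V} (huv : G.Adj u v)
    (hvb : G.Adj v b) (hub : G.Adj u b) : False := by
  have hp2 : (SimpleGraph.Walk.cons huv (SimpleGraph.Walk.cons hvb SimpleGraph.Walk.nil)).IsPath := by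
    simp [SimpleGraph.Walk.isPath_def]
    exact ⟨⟨huv.ne, hub.ne⟩, hvb.ne⟩
  have h := hT.IsAcyclic.path_unique (SimpleGraph.Path.singleton hub) ⟨_, hp2⟩
  have h2 := congrArg (fun p : G.Path u b => p.1.length) h
  simp [SimpleGraph.Path.singleton] at h2

lemma phi_adj {G : SimpleGraph V} {u v x z : V} (huv : G.Adj u v) (h : G.Adj x z)
    (hne : phi u v x ≠ phi u v z) : (edgeMove G u v).Adj (phi u v x) (phi u v z) := by
  by_cases hx : x = v
  · have hz : z ≠ v := fun hzv => h.ne (hx.trans hzv.symm)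
    rw [hx, phi_v, phi_ne hz] at hne ⊢
    exact (adj_iff huv).mpr (Or.inr (Or.inr (Or.inr (Or.inl ⟨rfl, hx ▸ h, Ne.symm hne⟩))))
  · by_cases hz : z = v
    · rw [phi_ne hx, hz, phi_v] at hne ⊢
      exact (adj_iff huv).mpr (Or.inr (Or.inr (Or.inr (Or.inr ⟨rfl, (hz ▸ h).symm, hne⟩))))
    · rw [phi_ne hx, phi_ne hz]
      exact (adj_iff huv).mpr (Or.inl ⟨h, hx, hz⟩)

lemma fwd {G : SimpleGraph V} {u v : V} (huv : G.Adj u v) {x y : V} (p : G.Walk x y) :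
    ∃ q : (edgeMove G u v).Walk (phi u v x) (phi u v y),
      ∀ e ∈ q.edges, ∃ e' ∈ p.edges, e = Sym2.map (phi u v) e' := by
  induction p with
  | nil => exact ⟨SimpleGraph.Walk.nil, by simp⟩
  | @cons x z _ h p ih =>
    obtain ⟨q, hq⟩ := ih
    by_cases hxz : phi u v x = phi u v z
    · refine ⟨q.copy hxz.symm rfl, ?_⟩
      intro e he
      rw [SimpleGraph.Walk.edges_copy] at he
      obtain ⟨e', he', heq⟩ := hq e he
      exact ⟨e', List.mem_cons_of_mem _ he', heq⟩
    · refine ⟨SimpleGraph.Walk.cons (phi_adj huv h hxz) q, ?_⟩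
      intro e he
      rw [SimpleGraph.Walk.edges_cons] at he
      rcases List.mem_cons.mp he with rfl | he
      · exact ⟨s(x, z), List.mem_cons_self, by simp [Sym2.map_pair_eq]⟩
      · obtain ⟨e', he', heq⟩ := hq e he
        exact ⟨e', List.mem_cons_of_mem _ he', heq⟩

lemma bwd {G : SimpleGraph V} {u v : V} (huv : G.Adj u v) {x y : V}
    (p : (edgeMove G u v).Walk x y) :
    ∃ q : G.Walk x y, ∀ e ∈ q.edges,
      e ∈ p.edges ∨ e = s(u, v) ∨ ∃ c, e = s(v, c) ∧ s(u, c) ∈ p.edges := by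
  induction p with
  | nil => exact ⟨SimpleGraph.Walk.nil, by simp⟩
  | @cons x z _ h p ih =>
    obtain ⟨q, hq⟩ := ih
    have hqmem : ∀ e ∈ q.edges,
        e ∈ (SimpleGraph.Walk.cons h p).edges ∨ e = s(u, v) ∨
          ∃ c, e = s(v, c) ∧ s(u, c) ∈ (SimpleGraph.Walk.cons h p).edges := by
      intro e he
      rcases hq e he with h1 | h1 | ⟨c, hc1, hc2⟩
      · exact Or.inl (by rw [SimpleGraph.Walk.edges_cons]; exact List.mem_cons_of_mem _ h1)
      · exact Or.inr (Or.inl h1)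
      · exact Or.inr (Or.inr ⟨c, hc1,
          by rw [SimpleGraph.Walk.edges_cons]; exact List.mem_cons_of_mem _ hc2⟩)
    rcases (adj_iff huv).mp h with ⟨h1,_,_⟩|⟨rfl,rfl⟩|⟨rfl,rfl⟩|⟨rfl,h2,h3⟩|⟨rfl,h2,h3⟩
    · refine ⟨SimpleGraph.Walk.cons h1 q, ?_⟩
      intro e he
      rcases List.mem_cons.mp (by rwa [SimpleGraph.Walk.edges_cons] at he) with rfl | he
      · exact Or.inl (by rw [SimpleGraph.Walk.edges_cons]; exact List.mem_cons_self)
      · exact hqmem e he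
    · refine ⟨SimpleGraph.Walk.cons huv q, ?_⟩
      intro e he
      rcases List.mem_cons.mp (by rwa [SimpleGraph.Walk.edges_cons] at he) with rfl | he
      · exact Or.inr (Or.inl rfl)
      · exact hqmem e he
    · refine ⟨SimpleGraph.Walk.cons huv.symm q, ?_⟩
      intro e he
      rcases List.mem_cons.mp (by rwa [SimpleGraph.Walk.edges_cons] at he) with rfl | he
      · exact Or.inr (Or.inl (Sym2.eq_swap))
      · exact hqmem e he
    · -- x = u, G.Adj v z, z ≠ u : go u - v - z
      refine ⟨SimpleGraph.Walk.cons huv (SimpleGraph.Walk.cons h2 q), ?_⟩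
      intro e he
      simp only [SimpleGraph.Walk.edges_cons, List.mem_cons] at he
      rcases he with rfl | rfl | he
      · exact Or.inr (Or.inl rfl)
      · exact Or.inr (Or.inr ⟨z, rfl,
          by rw [SimpleGraph.Walk.edges_cons]; exact List.mem_cons_self⟩)
      · exact hqmem e he
    · -- z = u, G.Adj v x, x ≠ u : go x - v - u
      refine ⟨SimpleGraph.Walk.cons h2.symm (SimpleGraph.Walk.cons huv.symm q), ?_⟩
      intro e he
      simp only [SimpleGraph.Walk.edges_cons, List.mem_cons] at he
      rcases he with rfl | rfl | he
      · refine Or.inr (Or.inr ⟨x, Sym2.eq_swap, ?_⟩)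
        rw [SimpleGraph.Walk.edges_cons]
        exact List.mem_cons.mpr (Or.inl Sym2.eq_swap)
      · exact Or.inr (Or.inl Sym2.eq_swap)
      · exact hqmem e he



-- CHUNK5: connectivity, bridges, component equalities
section Chunk5
variable {G : SimpleGraph V} {u v : V}

lemma conn' (hT : G.IsTree) (huv : G.Adj u v) : (edgeMove G u v).Connected := by
  have hu : ∀ w, (edgeMove G u v).Reachable w u := by
    intro w
    by_cases hw : w = v
    · exact hw ▸ ((adj_uv huv).symm.reachable)
    · obtain ⟨q, _⟩ := fwd huv ((hT.isConnected.preconnected w u).some)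
      rw [phi_ne hw, phi_ne huv.ne] at q
      exact ⟨q⟩
  rw [connected_iff]
  exact ⟨fun w₁ w₂ => (hu w₁).trans (hu w₂).symm, ⟨u⟩⟩

lemma bridgeG (hT : G.IsTree) {a b : V} (hab : G.Adj a b) : G.IsBridge s(a, b) :=
  isAcyclic_iff_forall_adj_isBridge.mp hT.IsAcyclic hab

lemma mk_bridge {H : SimpleGraph V} {a b : V} (hadj : H.Adj a b)
    (h : ¬(H.deleteEdges {s(a, b)}).Reachable a b) : H.IsBridge s(a, b) :=
  isBridge_iff.mpr h

lemma aux_phi {x y c d : V} (hc : c ≠ v) (hd : d ≠ v)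
    (h1 : phi u v x = c) (h2 : phi u v y = d) :
    (x = c ∧ y = d) ∨ (c = u ∧ x = v ∧ y = d) ∨ (d = u ∧ y = v ∧ x = c) ∨ (c = u ∧ d = u) := by
  by_cases hx : x = v
  · have hcu : c = u := by rw [hx, phi_v] at h1; exact h1.symm
    by_cases hy : y = v
    · exact Or.inr (Or.inr (Or.inr ⟨hcu, by rw [hy, phi_v] at h2; exact h2.symm⟩))
    · exact Or.inr (Or.inl ⟨hcu, hx, by rwa [phi_ne hy] at h2⟩)
  · have hxc : x = c := by rwa [phi_ne hx] at h1
    by_cases hy : y = v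
    · exact Or.inr (Or.inr (Or.inl ⟨by rw [hy, phi_v] at h2; exact h2.symm, hy, hxc⟩))
    · exact Or.inl ⟨hxc, by rwa [phi_ne hy] at h2⟩

lemma map_phi_eq {c d : V} {e : Sym2 V} (hc : c ≠ v) (hd : d ≠ v)
    (h : Sym2.map (phi u v) e = s(c, d)) :
    e = s(c, d) ∨ (c = u ∧ e = s(v, d)) ∨ (d = u ∧ e = s(c, v)) ∨ (c = u ∧ d = u) := by
  induction e using Sym2.ind with
  | _ x y =>
    rw [Sym2.map_pair_eq, Sym2.eq_iff] at h
    rcases h with ⟨h1, h2⟩ | ⟨h1, h2⟩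
    · rcases aux_phi hc hd h1 h2 with ⟨rfl, rfl⟩ | ⟨hcu, hx, hy⟩ | ⟨hdu, hy, hx⟩ | h4
      · exact Or.inl rfl
      · exact Or.inr (Or.inl ⟨hcu, by rw [hx, hy]⟩)
      · exact Or.inr (Or.inr (Or.inl ⟨hdu, by rw [hx, hy]⟩))
      · exact Or.inr (Or.inr (Or.inr h4))
    · rcases aux_phi hd hc h1 h2 with ⟨hx, hy⟩ | ⟨hdu, hx, hy⟩ | ⟨hcu, hy, hx⟩ | ⟨h4, h5⟩
      · exact Or.inl (by rw [hx, hy, Sym2.eq_swap])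
      · exact Or.inr (Or.inr (Or.inl ⟨hdu, by rw [hx, hy, Sym2.eq_swap]⟩))
      · exact Or.inr (Or.inl ⟨hcu, by rw [hx, hy, Sym2.eq_swap]⟩)
      · exact Or.inr (Or.inr (Or.inr ⟨h5, h4⟩))

/-- backward avoidance, type A : if a G'-walk avoids `s(a,b)` (with `a,b ≠ v`),
the `bwd` image avoids it too -/
lemma bwd_avoid_A (hT : G.IsTree) (huv : G.Adj u v) {a b x y : V}
    (ha : a ≠ v) (hb : b ≠ v) (p : (edgeMove G u v).Walk x y)
    (hp : ∀ e ∈ p.edges, e ∉ ({s(a, b)} : Set (Sym2 V))) :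
    ∃ q : G.Walk x y, ∀ e ∈ q.edges, e ∉ ({s(a, b)} : Set (Sym2 V)) := by
  obtain ⟨q, hq⟩ := bwd huv p
  refine ⟨q, fun e he => ?_⟩
  rw [Set.mem_singleton_iff]
  rintro rfl
  rcases hq _ he with h1 | h1 | ⟨c, hc1, hc2⟩
  · exact hp _ h1 rfl
  · rw [Sym2.eq_iff] at h1
    rcases h1 with ⟨_, h⟩ | ⟨h, _⟩
    · exact hb h
    · exact ha h
  · rw [Sym2.eq_iff] at hc1
    rcases hc1 with ⟨h, _⟩ | ⟨_, h⟩
    · exact ha h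
    · exact hb h

/-- forward avoidance, type A -/
lemma fwd_avoid_A (hT : G.IsTree) (huv : G.Adj u v) {a b x y : V}
    (hab : G.Adj a b) (ha : a ≠ v) (hb : b ≠ v) (q : G.Walk x y)
    (hq : ∀ e ∈ q.edges, e ∉ ({s(a, b)} : Set (Sym2 V))) :
    ∃ p : (edgeMove G u v).Walk (phi u v x) (phi u v y),
      ∀ e ∈ p.edges, e ∉ ({s(a, b)} : Set (Sym2 V)) := by
  obtain ⟨p, hp⟩ := fwd huv q
  refine ⟨p, fun e he => ?_⟩
  rw [Set.mem_singleton_iff]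
  rintro rfl
  obtain ⟨e', he', heq⟩ := hp _ he
  rcases map_phi_eq ha hb heq.symm with h1 | ⟨hau, h1⟩ | ⟨hbu, h1⟩ | ⟨hau, hbu⟩
  · exact hq _ (h1 ▸ he') rfl
  · have hvb : G.Adj v b := (mem_edgeSet _).mp (h1 ▸ q.edges_subset_edgeSet he')
    exact no_triangle hT huv hvb (hau ▸ hab)
  · have hva : G.Adj v a := ((mem_edgeSet _).mp (h1 ▸ q.edges_subset_edgeSet he')).symm
    exact no_triangle hT huv hva (hbu ▸ hab).symm
  · exact hab.ne (hau.trans hbu.symm)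

lemma bridge_typeA (hT : G.IsTree) (huv : G.Adj u v) {a b : V}
    (hab : G.Adj a b) (ha : a ≠ v) (hb : b ≠ v) : (edgeMove G u v).IsBridge s(a, b) := by
  refine mk_bridge ((adj_iff huv).mpr (Or.inl ⟨hab, ha, hb⟩)) (fun h => ?_)
  obtain ⟨p, hp⟩ := reach_deleteEdges_iff.mp h
  obtain ⟨q, hq⟩ := bwd_avoid_A hT huv ha hb p hp
  exact not_both (bridgeG hT hab) (Reachable.refl _)
    (reach_deleteEdges_iff.mpr ⟨q, hq⟩)

lemma comp_typeA (hT : G.IsTree) (huv : G.Adj u v) {a b : V}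
    (hab : G.Adj a b) (ha : a ≠ v) (hb : b ≠ v) [Fintype V] :
    comp ((edgeMove G u v).deleteEdges {s(a, b)}) a = comp (G.deleteEdges {s(a, b)}) a := by
  ext w
  simp only [mem_comp]
  constructor
  · intro h
    obtain ⟨p, hp⟩ := reach_deleteEdges_iff.mp h
    obtain ⟨q, hq⟩ := bwd_avoid_A hT huv ha hb p hp
    exact reach_deleteEdges_iff.mpr ⟨q, hq⟩
  · intro h
    obtain ⟨q, hq⟩ := reach_deleteEdges_iff.mp h
    obtain ⟨p, hp⟩ := fwd_avoid_A hT huv hab ha hb q hq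
    have hreach : ((edgeMove G u v).deleteEdges {s(a, b)}).Reachable (phi u v w) (phi u v a) :=
      reach_deleteEdges_iff.mpr ⟨p, hp⟩
    rw [phi_ne ha] at hreach
    have h2 : ((edgeMove G u v).deleteEdges {s(a, b)}).Reachable w (phi u v w) := by
      by_cases hw : w = v
      · rw [hw, phi_v]
        refine Adj.reachable ?_
        rw [deleteEdges_adj]
        refine ⟨(adj_uv huv).symm, ?_⟩
        rw [Set.mem_singleton_iff]
        intro hcon
        rw [Sym2.eq_iff] at hcon
        rcases hcon with ⟨h, _⟩ | ⟨h, _⟩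
        · exact ha h.symm
        · exact hb h.symm
      · rw [phi_ne hw]
    exact h2.trans hreach

end Chunk5

-- CHUNK6: type C (edges at v), the uv edge, mu equalities
section Chunk6
variable {G : SimpleGraph V} {u v : V}

/-- backward avoidance, type C: a G'-walk avoiding `s(u,b)` maps to a G-walk avoiding `s(v,b)` -/
lemma bwd_avoid_C (hT : G.IsTree) (huv : G.Adj u v) {b x y : V}
    (hvb : G.Adj v b) (hbu : b ≠ u) (p : (edgeMove G u v).Walk x y)
    (hp : ∀ e ∈ p.edges, e ∉ ({s(u, b)} : Set (Sym2 V))) :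
    ∃ q : G.Walk x y, ∀ e ∈ q.edges, e ∉ ({s(v, b)} : Set (Sym2 V)) := by
  obtain ⟨q, hq⟩ := bwd huv p
  refine ⟨q, fun e he => ?_⟩
  rw [Set.mem_singleton_iff]
  rintro rfl
  rcases hq _ he with h1 | h1 | ⟨c, hc1, hc2⟩
  · -- s(v,b) ∈ p.edges : impossible since v's only G'-neighbour is u
    have h2 := p.edges_subset_edgeSet h1
    rw [mem_edgeSet] at h2
    exact hbu (v_adj huv h2)
  · rw [Sym2.eq_iff] at h1
    rcases h1 with ⟨h, _⟩ | ⟨_, h⟩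
    · exact huv.ne' h
    · exact hbu h
  · rw [Sym2.eq_iff] at hc1
    rcases hc1 with ⟨_, h⟩ | ⟨_, h⟩
    · exact hp _ (by rw [← h] at hc2; exact hc2) rfl
    · exact hvb.ne' h

/-- forward avoidance, type C -/
lemma fwd_avoid_C (hT : G.IsTree) (huv : G.Adj u v) {b x y : V}
    (hvb : G.Adj v b) (hbu : b ≠ u) (q : G.Walk x y)
    (hq : ∀ e ∈ q.edges, e ∉ ({s(v, b)} : Set (Sym2 V))) :
    ∃ p : (edgeMove G u v).Walk (phi u v x) (phi u v y),
      ∀ e ∈ p.edges, e ∉ ({s(u, b)} : Set (Sym2 V)) := by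
  obtain ⟨p, hp⟩ := fwd huv q
  refine ⟨p, fun e he => ?_⟩
  rw [Set.mem_singleton_iff]
  rintro rfl
  obtain ⟨e', he', heq⟩ := hp _ he
  have hbv : b ≠ v := hvb.ne'
  rcases map_phi_eq huv.ne hbv heq.symm with h1 | ⟨_, h1⟩ | ⟨hbu2, _⟩ | ⟨_, hbu2⟩
  · have hub : G.Adj u b := (mem_edgeSet _).mp (h1 ▸ q.edges_subset_edgeSet he')
    exact no_triangle hT huv hvb hub
  · exact hq _ (h1 ▸ he') rfl
  · exact hbu hbu2
  · exact hbu hbu2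

lemma adj_typeC (huv : G.Adj u v) {b : V} (hvb : G.Adj v b) (hbu : b ≠ u) :
    (edgeMove G u v).Adj u b :=
  (adj_iff huv).mpr (Or.inr (Or.inr (Or.inr (Or.inl ⟨rfl, hvb, hbu⟩))))

lemma bridge_typeC (hT : G.IsTree) (huv : G.Adj u v) {b : V}
    (hvb : G.Adj v b) (hbu : b ≠ u) : (edgeMove G u v).IsBridge s(u, b) := by
  refine mk_bridge (adj_typeC huv hvb hbu) (fun h => ?_)
  obtain ⟨p, hp⟩ := reach_deleteEdges_iff.mp h
  obtain ⟨q, hq⟩ := bwd_avoid_C hT huv hvb hbu p hp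
  have h1 : (G.deleteEdges {s(v, b)}).Reachable u b := reach_deleteEdges_iff.mpr ⟨q, hq⟩
  have h2 : (G.deleteEdges {s(v, b)}).Adj v u := by
    rw [deleteEdges_adj]
    refine ⟨huv.symm, ?_⟩
    rw [Set.mem_singleton_iff]
    intro hcon
    rw [Sym2.eq_iff] at hcon
    rcases hcon with ⟨_, h⟩ | ⟨h, _⟩
    · exact hbu h.symm
    · exact hvb.ne h
  exact not_both (bridgeG hT hvb) (Reachable.refl _) (h2.reachable.trans h1)

lemma uv_ne_vb {b : V} (huv : G.Adj u v) (hbu : b ≠ u) : s(u, v) ≠ s(v, b) := by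
  intro hcon
  rw [Sym2.eq_iff] at hcon
  rcases hcon with ⟨h, _⟩ | ⟨h, _⟩
  · exact huv.ne h
  · exact hbu h.symm

lemma uv_ne_ub {b : V} (hbv : b ≠ v) : s(u, v) ≠ s(u, b) := by
  intro hcon
  rw [Sym2.eq_iff] at hcon
  rcases hcon with ⟨_, h⟩ | ⟨h1, h2⟩
  · exact hbv h.symm
  · exact hbv (h1.symm.trans h2.symm)

lemma comp_typeC_far (hT : G.IsTree) (huv : G.Adj u v) {b : V}
    (hvb : G.Adj v b) (hbu : b ≠ u) [Fintype V] :
    comp ((edgeMove G u v).deleteEdges {s(u, b)}) b = comp (G.deleteEdges {s(v, b)}) b := by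
  ext w
  simp only [mem_comp]
  constructor
  · intro h
    obtain ⟨p, hp⟩ := reach_deleteEdges_iff.mp h
    obtain ⟨q, hq⟩ := bwd_avoid_C hT huv hvb hbu p hp
    exact reach_deleteEdges_iff.mpr ⟨q, hq⟩
  · intro h
    obtain ⟨q, hq⟩ := reach_deleteEdges_iff.mp h
    obtain ⟨p, hp⟩ := fwd_avoid_C hT huv hvb hbu q hq
    have hreach : ((edgeMove G u v).deleteEdges {s(u, b)}).Reachable (phi u v w) (phi u v b) :=
      reach_deleteEdges_iff.mpr ⟨p, hp⟩
    rw [phi_ne hvb.ne'] at hreach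
    have h2 : ((edgeMove G u v).deleteEdges {s(u, b)}).Reachable w (phi u v w) := by
      by_cases hw : w = v
      · rw [hw, phi_v]
        refine Adj.reachable ?_
        rw [deleteEdges_adj]
        exact ⟨(adj_uv huv).symm, by
          rw [Set.mem_singleton_iff]
          exact fun hh => (uv_ne_ub hvb.ne') (Sym2.eq_swap.trans hh)⟩
      · rw [phi_ne hw]
    exact h2.trans hreach

lemma comp_typeC_near (hT : G.IsTree) (huv : G.Adj u v) {b : V}
    (hvb : G.Adj v b) (hbu : b ≠ u) [Fintype V] :
    comp ((edgeMove G u v).deleteEdges {s(u, b)}) u = comp (G.deleteEdges {s(v, b)}) v := by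
  ext w
  simp only [mem_comp]
  have hedge : (G.deleteEdges {s(v, b)}).Adj u v := by
    rw [deleteEdges_adj]
    exact ⟨huv, by rw [Set.mem_singleton_iff]; exact uv_ne_vb huv hbu⟩
  constructor
  · intro h
    obtain ⟨p, hp⟩ := reach_deleteEdges_iff.mp h
    obtain ⟨q, hq⟩ := bwd_avoid_C hT huv hvb hbu p hp
    exact (reach_deleteEdges_iff.mpr ⟨q, hq⟩).trans hedge.reachable
  · intro h
    obtain ⟨q, hq⟩ := reach_deleteEdges_iff.mp h
    obtain ⟨p, hp⟩ := fwd_avoid_C hT huv hvb hbu q hq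
    have hreach : ((edgeMove G u v).deleteEdges {s(u, b)}).Reachable (phi u v w) (phi u v v) :=
      reach_deleteEdges_iff.mpr ⟨p, hp⟩
    rw [phi_v] at hreach
    have h2 : ((edgeMove G u v).deleteEdges {s(u, b)}).Reachable w (phi u v w) := by
      by_cases hw : w = v
      · rw [hw, phi_v]
        refine Adj.reachable ?_
        rw [deleteEdges_adj]
        exact ⟨(adj_uv huv).symm, by
          rw [Set.mem_singleton_iff]
          exact fun hh => (uv_ne_ub hvb.ne') (Sym2.eq_swap.trans hh)⟩
      · rw [phi_ne hw]
    exact h2.trans hreach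

lemma bridge_uv (hT : G.IsTree) (huv : G.Adj u v) : (edgeMove G u v).IsBridge s(u, v) := by
  refine mk_bridge (adj_uv huv) (fun h => ?_)
  obtain ⟨p⟩ := h.symm
  cases p with
  | nil => exact huv.ne' rfl
  | cons hadj _ =>
    rw [deleteEdges_adj] at hadj
    exact hadj.2 (by rw [Set.mem_singleton_iff, v_adj huv hadj.1, Sym2.eq_swap])

lemma comp_uv_v (hT : G.IsTree) (huv : G.Adj u v) [Fintype V] :
    comp ((edgeMove G u v).deleteEdges {s(u, v)}) v = {v} := by
  ext w
  simp only [mem_comp, Finset.mem_singleton]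
  constructor
  · intro h
    obtain ⟨p⟩ := h.symm
    cases p with
    | nil => rfl
    | cons hadj _ =>
      rw [deleteEdges_adj] at hadj
      exact absurd (by rw [Set.mem_singleton_iff, v_adj huv hadj.1, Sym2.eq_swap])
        (fun hh => hadj.2 hh)
  · rintro rfl; exact Reachable.refl _
end Chunk6

-- CHUNK7: mu equalities, counting, final assembly
section Chunk7
variable {G : SimpleGraph V} {u v : V}

lemma mu_comm [Fintype V] (H : SimpleGraph V) (a b : V) : mu H a b = mu H b a :=
  min_comm _ _

lemma muE_mk [Fintype V] (H : SimpleGraph V) (x y : V) : muE H s(x, y) = mu H x y := rfl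

lemma mu_typeA [Fintype V] (hT : G.IsTree) (huv : G.Adj u v) {a b : V}
    (hab : G.Adj a b) (ha : a ≠ v) (hb : b ≠ v) :
    mu (edgeMove G u v) a b = mu G a b := by
  rw [mu_eq (conn' hT huv) (bridge_typeA hT huv hab ha hb)
      ((adj_iff huv).mpr (Or.inl ⟨hab, ha, hb⟩)),
    mu_eq hT.isConnected (bridgeG hT hab) hab,
    comp_typeA hT huv hab ha hb]
  congr 1
  rw [del_comm (edgeMove G u v) a b, del_comm G a b]
  exact congrArg Finset.card (comp_typeA hT huv hab.symm hb ha)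

lemma mu_typeC [Fintype V] (hT : G.IsTree) (huv : G.Adj u v) {b : V}
    (hvb : G.Adj v b) (hbu : b ≠ u) :
    mu (edgeMove G u v) u b = mu G v b := by
  rw [mu_eq (conn' hT huv) (bridge_typeC hT huv hvb hbu) (adj_typeC huv hvb hbu),
    mu_eq hT.isConnected (bridgeG hT hvb) hvb,
    comp_typeC_near hT huv hvb hbu]
  congr 1
  exact congrArg Finset.card (comp_typeC_far hT huv hvb hbu)

lemma mu_uv [Fintype V] (hT : G.IsTree) (huv : G.Adj u v) :
    mu (edgeMove G u v) u v = 1 := by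
  have hb := bridge_uv hT huv
  have hc := conn' hT huv
  have h1 : side (edgeMove G u v) v u = 1 := by
    rw [side_eq hc (bridge_comm hb) (adj_uv huv).symm, del_comm (edgeMove G u v) v u,
      comp_uv_v hT huv]
    simp
  have h2 : 1 ≤ side (edgeMove G u v) u v := by
    rw [side_eq hc hb (adj_uv huv)]
    exact Finset.card_pos.mpr ⟨u, mem_comp.mpr (Reachable.refl _)⟩
  rw [mu, h1]
  omega

lemma part_uv [Fintype V] (hT : G.IsTree) (huv : G.Adj u v) :
    side G u v + side G v u = Fintype.card V := by
  rw [side_eq hT.isConnected (bridgeG hT huv) huv,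
    side_eq hT.isConnected (bridge_comm (bridgeG hT huv)) huv.symm,
    del_comm G v u]
  exact comp_partition hT.isConnected (bridgeG hT huv) huv

/-- the inverse edge map -/
noncomputable def psi (G : SimpleGraph V) (u v : V) : Sym2 V → Sym2 V :=
  fun e => if e ∈ G.edgeSet then e else Sym2.map (fun x => if x = u then v else x) e

lemma psi_of_mem {e : Sym2 V} (h : e ∈ G.edgeSet) : psi G u v e = e := if_pos h

lemma psi_of_not_mem {e : Sym2 V} (h : e ∉ G.edgeSet) :
    psi G u v e = Sym2.map (fun x => if x = u then v else x) e := if_neg h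

lemma card_filter_erase [Fintype V] (hT : G.IsTree) (huv : G.Adj u v) (i : ℕ) :
    (((Finset.univ.filter fun e : Sym2 V => e ∈ G.edgeSet ∧ muE G e = i)).erase s(u, v)).card =
    (((Finset.univ.filter fun e : Sym2 V =>
        e ∈ (edgeMove G u v).edgeSet ∧ muE (edgeMove G u v) e = i)).erase s(u, v)).card := by
  refine Finset.card_bij' (fun e _ => Sym2.map (phi u v) e) (fun e _ => psi G u v e)
    ?_ ?_ ?_ ?_
  · -- maps source into target
    intro e he
    beta_reduce
    rw [Finset.mem_erase, Finset.mem_filter] at he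
    obtain ⟨hne, -, hmem, hmu⟩ := he
    induction e using Sym2.ind with
    | _ x y =>
      rw [mem_edgeSet] at hmem
      rw [Finset.mem_erase, Finset.mem_filter]
      by_cases hx : x = v
      · have hyv : y ≠ v := fun h => hmem.ne (hx.trans h.symm)
        have hyu : y ≠ u := fun h => hne (by rw [hx, h, Sym2.eq_swap])
        have hmap : Sym2.map (phi u v) s(x, y) = s(u, y) := by
          rw [Sym2.map_pair_eq, hx, phi_v, phi_ne hyv]
        have hvy : G.Adj v y := hx ▸ hmem
        rw [hmap]
        refine ⟨fun h => (uv_ne_ub hyv) h.symm, Finset.mem_univ _, ?_, ?_⟩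
        · exact (mem_edgeSet _).mpr (adj_typeC huv hvy hyu)
        · rw [muE_mk, mu_typeC hT huv hvy hyu, ← muE_mk, ← hx, hmu]
      · by_cases hy : y = v
        · have hxu : x ≠ u := fun h => hne (by rw [hy, h])
          have hmap : Sym2.map (phi u v) s(x, y) = s(x, u) := by
            rw [Sym2.map_pair_eq, hy, phi_v, phi_ne hx]
          have hvx : G.Adj v x := (hy ▸ hmem).symm
          rw [hmap]
          refine ⟨fun h => (uv_ne_ub hx) (h.symm.trans Sym2.eq_swap),
            Finset.mem_univ _, ?_, ?_⟩
          · rw [Sym2.eq_swap]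
            exact (mem_edgeSet _).mpr (adj_typeC huv hvx hxu)
          · rw [Sym2.eq_swap, muE_mk, mu_typeC hT huv hvx hxu, ← muE_mk, ← hy,
              Sym2.eq_swap, hmu]
        · have hmap : Sym2.map (phi u v) s(x, y) = s(x, y) := by
            rw [Sym2.map_pair_eq, phi_ne hx, phi_ne hy]
          rw [hmap]
          refine ⟨?_, Finset.mem_univ _, ?_, ?_⟩
          · intro hcon
            rw [Sym2.eq_iff] at hcon
            rcases hcon with ⟨_, h⟩ | ⟨h, _⟩
            · exact hy h
            · exact hx h
          · exact (mem_edgeSet _).mpr ((adj_iff huv).mpr (Or.inl ⟨hmem, hx, hy⟩))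
          · rw [muE_mk, mu_typeA hT huv hmem hx hy, ← muE_mk, hmu]
  · -- maps target into source
    intro e he
    beta_reduce
    rw [Finset.mem_erase, Finset.mem_filter] at he
    obtain ⟨hne, -, hmem, hmu⟩ := he
    induction e using Sym2.ind with
    | _ x y =>
      rw [mem_edgeSet] at hmem
      rw [Finset.mem_erase, Finset.mem_filter]
      rcases (adj_iff huv).mp hmem with ⟨h1, hx, hy⟩ | ⟨rfl, rfl⟩ | ⟨rfl, rfl⟩ |
        ⟨hxu, h2, h3⟩ | ⟨hyu, h2, h3⟩
      · rw [psi_of_mem ((mem_edgeSet _).mpr h1)]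
        refine ⟨?_, Finset.mem_univ _, (mem_edgeSet _).mpr h1, ?_⟩
        · intro hcon
          rw [Sym2.eq_iff] at hcon
          rcases hcon with ⟨_, h⟩ | ⟨h, _⟩
          · exact hy h
          · exact hx h
        · rw [muE_mk, ← mu_typeA hT huv h1 hx hy, ← muE_mk, hmu]
      · exact absurd rfl hne
      · exact absurd Sym2.eq_swap hne
      · -- e = s(u, y), G.Adj v y, y ≠ u
        have hxu' := hxu.symm
        subst hxu'
        have hnm : s(u, y) ∉ G.edgeSet := fun h =>
          no_triangle hT huv h2 ((mem_edgeSet _).mp h)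
        rw [psi_of_not_mem hnm, Sym2.map_pair_eq, if_pos rfl, if_neg h3]
        refine ⟨Ne.symm (uv_ne_vb huv h3), Finset.mem_univ _, (mem_edgeSet _).mpr h2, ?_⟩
        · rw [muE_mk, ← mu_typeC hT huv h2 h3, ← muE_mk, hmu]
      · -- e = s(x, u), G.Adj v x, x ≠ u
        have hyu' := hyu.symm
        subst hyu'
        have hnm : s(x, u) ∉ G.edgeSet := fun h =>
          no_triangle hT huv h2 ((mem_edgeSet _).mp h).symm
        rw [psi_of_not_mem hnm, Sym2.map_pair_eq, if_pos rfl, if_neg h3]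
        refine ⟨?_, Finset.mem_univ _, (mem_edgeSet _).mpr h2.symm, ?_⟩
        · exact fun h => (uv_ne_vb huv h3) (h.symm.trans Sym2.eq_swap)
        · rw [Sym2.eq_swap, muE_mk, ← mu_typeC hT huv h2 h3, ← muE_mk, Sym2.eq_swap, hmu]
  · -- left inverse
    intro e he
    beta_reduce
    rw [Finset.mem_erase, Finset.mem_filter] at he
    obtain ⟨hne, -, hmem, -⟩ := he
    induction e using Sym2.ind with
    | _ x y =>
      rw [mem_edgeSet] at hmem
      by_cases hx : x = v
      · have hyv : y ≠ v := fun h => hmem.ne (hx.trans h.symm)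
        have hyu : y ≠ u := fun h => hne (by rw [hx, h, Sym2.eq_swap])
        have hmap : Sym2.map (phi u v) s(x, y) = s(u, y) := by
          rw [Sym2.map_pair_eq, hx, phi_v, phi_ne hyv]
        have hnm : s(u, y) ∉ G.edgeSet := fun h =>
          no_triangle hT huv (hx ▸ hmem) ((mem_edgeSet _).mp h)
        rw [hmap, psi_of_not_mem hnm, Sym2.map_pair_eq, if_pos rfl, if_neg hyu, ← hx]
      · by_cases hy : y = v
        · have hxu : x ≠ u := fun h => hne (by rw [hy, h])
          have hmap : Sym2.map (phi u v) s(x, y) = s(x, u) := by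
            rw [Sym2.map_pair_eq, hy, phi_v, phi_ne hx]
          have hnm : s(x, u) ∉ G.edgeSet := fun h =>
            no_triangle hT huv (hy ▸ hmem).symm ((mem_edgeSet _).mp h).symm
          rw [hmap, psi_of_not_mem hnm, Sym2.map_pair_eq, if_neg hxu, if_pos rfl, ← hy]
        · have hmap : Sym2.map (phi u v) s(x, y) = s(x, y) := by
            rw [Sym2.map_pair_eq, phi_ne hx, phi_ne hy]
          rw [hmap, psi_of_mem ((mem_edgeSet _).mpr hmem)]
  · -- right inverse
    intro e he
    beta_reduce
    rw [Finset.mem_erase, Finset.mem_filter] at he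
    obtain ⟨hne, -, hmem, -⟩ := he
    induction e using Sym2.ind with
    | _ x y =>
      rw [mem_edgeSet] at hmem
      rcases (adj_iff huv).mp hmem with ⟨h1, hx, hy⟩ | ⟨rfl, rfl⟩ | ⟨rfl, rfl⟩ |
        ⟨hxu, h2, h3⟩ | ⟨hyu, h2, h3⟩
      · rw [psi_of_mem ((mem_edgeSet _).mpr h1), Sym2.map_pair_eq, phi_ne hx, phi_ne hy]
      · exact absurd rfl hne
      · exact absurd Sym2.eq_swap hne
      · have hxu' := hxu.symm
        subst hxu'
        have hnm : s(u, y) ∉ G.edgeSet := fun h =>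
          no_triangle hT huv h2 ((mem_edgeSet _).mp h)
        have hyv : y ≠ v := h2.ne'
        rw [psi_of_not_mem hnm, Sym2.map_pair_eq, if_pos rfl, if_neg h3,
          Sym2.map_pair_eq, phi_v, phi_ne hyv]
      · have hyu' := hyu.symm
        subst hyu'
        have hnm : s(x, u) ∉ G.edgeSet := fun h =>
          no_triangle hT huv h2 ((mem_edgeSet _).mp h).symm
        have hxv : x ≠ v := h2.ne'
        rw [psi_of_not_mem hnm, Sym2.map_pair_eq, if_neg h3, if_pos rfl,
          Sym2.map_pair_eq, phi_ne hxv, phi_v]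

end Chunk7

-- CHUNK8: r relations and the final theorem's proof pieces
section Chunk8
variable {G : SimpleGraph V} {u v : V}

lemma key_r [Fintype V] (hT : G.IsTree) (huv : G.Adj u v)
    (hm2 : 2 ≤ mu G u v) (i : ℕ) :
    r (edgeMove G u v) i + (if i = mu G u v then 1 else 0) =
      r G i + (if i = 1 then 1 else 0) := by
  have hcard := card_filter_erase hT huv i
  have hmemG : s(u, v) ∈ (Finset.univ.filter fun e : Sym2 V =>
      e ∈ G.edgeSet ∧ muE G e = i) ↔ i = mu G u v := by
    rw [Finset.mem_filter]
    constructor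
    · rintro ⟨-, -, h⟩; rw [← h, muE_mk]
    · rintro rfl; exact ⟨Finset.mem_univ _, (mem_edgeSet _).mpr huv, muE_mk G u v⟩
  have hmemG' : s(u, v) ∈ (Finset.univ.filter fun e : Sym2 V =>
      e ∈ (edgeMove G u v).edgeSet ∧ muE (edgeMove G u v) e = i) ↔ i = 1 := by
    rw [Finset.mem_filter]
    constructor
    · rintro ⟨-, -, h⟩; rw [← h, muE_mk, mu_uv hT huv]
    · rintro rfl
      exact ⟨Finset.mem_univ _, (mem_edgeSet _).mpr (adj_uv huv),
        (muE_mk _ u v).trans (mu_uv hT huv)⟩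
  show r (edgeMove G u v) i + _ = r G i + _
  unfold r
  have hnotG : i ≠ mu G u v → s(u, v) ∉ (Finset.univ.filter fun e : Sym2 V =>
      e ∈ G.edgeSet ∧ muE G e = i) := fun hi h => hi (hmemG.mp h)
  have hnotG' : i ≠ 1 → s(u, v) ∉ (Finset.univ.filter fun e : Sym2 V =>
      e ∈ (edgeMove G u v).edgeSet ∧ muE (edgeMove G u v) e = i) := fun hi h => hi (hmemG'.mp h)
  by_cases him : i = mu G u v
  · have h1 : i ≠ 1 := by omega
    rw [if_pos him, if_neg h1]
    have e1 := Finset.card_erase_add_one (hmemG.mpr him)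
    have e3 := congrArg Finset.card (Finset.erase_eq_of_notMem (hnotG' h1))
    omega
  · rw [if_neg him]
    by_cases h1 : i = 1
    · rw [if_pos h1]
      have e1 := Finset.card_erase_add_one (hmemG'.mpr h1)
      have e3 := congrArg Finset.card (Finset.erase_eq_of_notMem (hnotG him))
      omega
    · rw [if_neg h1]
      have e2 := congrArg Finset.card (Finset.erase_eq_of_notMem (hnotG him))
      have e3 := congrArg Finset.card (Finset.erase_eq_of_notMem (hnotG' h1))
      omega
end Chunk8

theorem stmt12' {V : Type*} [Fintype V] (G : SimpleGraph V) (hT : G.IsTree) (u v : V)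
    (huv : G.Adj u v) (h1 : 2 ≤ side G u v) (h2 : 2 ≤ side G v u) :
    Prec (Fintype.card V) (edgeMove G u v) G := by
  have hm2 : 2 ≤ mu G u v := le_min h1 h2
  have hpart : side G u v + side G v u = Fintype.card V := part_uv hT huv
  have hml : mu G u v ≤ side G u v := min_le_left _ _
  have hmr : mu G u v ≤ side G v u := min_le_right _ _
  have hsum : ∀ k, tailSum (edgeMove G u v) (Fintype.card V) k +
      (if mu G u v ∈ Finset.Icc k (Fintype.card V / 2) then 1 else 0) =
      tailSum G (Fintype.card V) k +
      (if 1 ∈ Finset.Icc k (Fintype.card V / 2) then 1 else 0) := by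
    intro k
    have h := Finset.sum_congr rfl (fun i (_ : i ∈ Finset.Icc k (Fintype.card V / 2)) =>
      key_r hT huv hm2 i)
    rw [Finset.sum_add_distrib, Finset.sum_add_distrib,
      Finset.sum_ite_eq' (Finset.Icc k (Fintype.card V / 2)) (mu G u v) (fun _ => 1),
      Finset.sum_ite_eq' (Finset.Icc k (Fintype.card V / 2)) 1 (fun _ => 1)] at h
    exact h
  constructor
  · intro k hk1 hk2
    have hs := hsum k
    simp only [Finset.mem_Icc] at hs
    split_ifs at hs <;> omega
  · refine ⟨2, by omega, by omega, ?_⟩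
    have hs := hsum 2
    simp only [Finset.mem_Icc] at hs
    split_ifs at hs <;> omega

end Proof12
/-- Let `T₁, T₂` be trees of orders `n₁ ≥ 2`, `n₂ ≥ 2`, let `T` be the tree
obtained by joining a vertex `u` of `T₁` and a vertex `v` of `T₂` by an edge (so `T` is a
tree in which `uv` is an edge whose two components after deletion have orders `≥ 2`), and
let `T'` be obtained from `T` by contracting `uv` to `u` and attaching a pendent vertex `v`
to `u`. Then `T ≻ T'`. -/
theorem stmt12 {V : Type*} [Fintype V] (G : SimpleGraph V) (hT : G.IsTree) (u v : V)
    (huv : G.Adj u v) (h1 : 2 ≤ side G u v) (h2 : 2 ≤ side G v u) :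
    Prec (Fintype.card V) (edgeMove G u v) G := by
  exact stmt12' G hT u v huv h1 h2

end TreeOrder
end

section
/- For every tree T on n vertices, S_n ⪯ T ⪯ P_n, where S_n is the star on n vertices and P_n is the path on n vertices. -/
namespace TreeOrder

attribute [local instance] Classical.propDecidable

variable {V : Type*} {W : Type*}

open SimpleGraph Finset


variable {G : SimpleGraph V}


lemma isPath_concat {u v w : V} {p : G.Walk u v} (hp : p.IsPath) (h : G.Adj v w)
    (hw : w ∉ p.support) : (p.concat h).IsPath := by
  rw [← SimpleGraph.Walk.isPath_reverse_iff, SimpleGraph.Walk.reverse_concat]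
  exact SimpleGraph.Walk.IsPath.cons hp.reverse
    (by simpa [SimpleGraph.Walk.support_reverse] using hw)

lemma path_length_eq_dist (hT : G.IsTree) {a b : V} (p : G.Walk a b) (hp : p.IsPath) :
    p.length = G.dist a b := by
  obtain ⟨q, hq⟩ := (hT.isConnected a b).exists_walk_length_eq_dist
  have huniq := hT.IsAcyclic.path_unique ⟨p, hp⟩ q.toPath
  have h1 : p.length ≤ q.length := by
    have h := congrArg (fun r : G.Path a b => (r : G.Walk a b).length) huniq
    simp only at h
    rw [h]
    exact q.length_bypass_le
  have h2 := SimpleGraph.dist_le p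
  omega

lemma dist_adj (hT : G.IsTree) {u v : V} (h : G.Adj u v) : G.dist u v = 1 :=
  SimpleGraph.dist_eq_one_iff_adj.2 h

/-- T2: trichotomy across an edge of a tree. -/
lemma dist_succ_or (hT : G.IsTree) {u v : V} (h : G.Adj u v) (w : V) :
    G.dist w v = G.dist w u + 1 ∨ G.dist w u = G.dist w v + 1 := by
  obtain ⟨p0⟩ := hT.isConnected w u
  set p := p0.toPath with hpdef
  have hp : (p : G.Walk w u).IsPath := p.isPath
  have hlen : (p : G.Walk w u).length = G.dist w u := path_length_eq_dist hT _ hp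
  by_cases hv : v ∈ (p : G.Walk w u).support
  · right
    have h1 := (p : G.Walk w u).take_spec hv
    have hlsum : ((p : G.Walk w u).takeUntil v hv).length
        + ((p : G.Walk w u).dropUntil v hv).length = (p : G.Walk w u).length := by
      conv_rhs => rw [← h1]
      rw [SimpleGraph.Walk.length_append]
    have ht : ((p : G.Walk w u).takeUntil v hv).length = G.dist w v :=
      path_length_eq_dist hT _ (hp.takeUntil hv)
    have hd : ((p : G.Walk w u).dropUntil v hv).length = G.dist v u :=
      path_length_eq_dist hT _ (hp.dropUntil hv)
    have : G.dist v u = 1 := dist_adj hT h.symm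
    omega
  · left
    have hq : ((p : G.Walk w u).concat h).IsPath := isPath_concat hp h hv
    have := path_length_eq_dist hT _ hq
    rw [SimpleGraph.Walk.length_concat] at this
    omega

/-- T4: an edge `xy` crossing the edge `uv` must be `uv` itself. -/
lemma cross_edge (hT : G.IsTree) {u v x y : V} (huv : G.Adj u v) (hxy : G.Adj x y)
    (hx : G.dist x v = G.dist x u + 1) (hy : G.dist y u = G.dist y v + 1) :
    x = u ∧ y = v := by
  -- step 1 : dist x u = dist y v
  have hsymm : ∀ a b : V, G.dist a b = G.dist b a := fun a b => SimpleGraph.dist_comm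
  have hab : G.dist x u = G.dist y v := by
    have h1 := dist_succ_or hT hxy u
    have h2 := dist_succ_or hT hxy v
    rw [hsymm u y, hsymm u x] at h1
    rw [hsymm v y, hsymm v x] at h2
    omega
  by_cases ha0 : G.dist x u = 0
  · have hxu : x = u := ((hT.isConnected x u).dist_eq_zero_iff).1 ha0
    have hyv : y = v := ((hT.isConnected y v).dist_eq_zero_iff).1 (by omega)
    exact ⟨hxu, hyv⟩
  · exfalso
    obtain ⟨p0⟩ := hT.isConnected x u
    set p := (p0.toPath : G.Walk x u) with hpdef
    have hp : p.IsPath := p0.toPath.isPath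
    have hplen : p.length = G.dist x u := path_length_eq_dist hT _ hp
    obtain ⟨q0⟩ := hT.isConnected y v
    set q := (q0.toPath : G.Walk y v) with hqdef
    have hq : q.IsPath := q0.toPath.isPath
    have hqlen : q.length = G.dist y v := path_length_eq_dist hT _ hq
    have hvp : v ∉ p.support := by
      intro hv
      have h1 := p.take_spec hv
      have hlsum : (p.takeUntil v hv).length + (p.dropUntil v hv).length = p.length := by
        conv_rhs => rw [← h1]; rw [SimpleGraph.Walk.length_append]
      have ht : (p.takeUntil v hv).length = G.dist x v := path_length_eq_dist hT _ (hp.takeUntil hv)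
      have hd : (p.dropUntil v hv).length = G.dist v u := path_length_eq_dist hT _ (hp.dropUntil hv)
      have : G.dist v u = 1 := dist_adj hT huv.symm
      omega
    have huq : u ∉ q.support := by
      intro hu
      have h1 := q.take_spec hu
      have hlsum : (q.takeUntil u hu).length + (q.dropUntil u hu).length = q.length := by
        conv_rhs => rw [← h1]; rw [SimpleGraph.Walk.length_append]
      have ht : (q.takeUntil u hu).length = G.dist y u := path_length_eq_dist hT _ (hq.takeUntil hu)
      have hd : (q.dropUntil u hu).length = G.dist u v := path_length_eq_dist hT _ (hq.dropUntil hu)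
      have : G.dist u v = 1 := dist_adj hT huv
      omega
    have hxq : x ∉ q.support := by
      intro hxs
      have h1 := q.take_spec hxs
      have hlsum : (q.takeUntil x hxs).length + (q.dropUntil x hxs).length = q.length := by
        conv_rhs => rw [← h1]; rw [SimpleGraph.Walk.length_append]
      have ht : (q.takeUntil x hxs).length = G.dist y x := path_length_eq_dist hT _ (hq.takeUntil hxs)
      have hd : (q.dropUntil x hxs).length = G.dist x v := path_length_eq_dist hT _ (hq.dropUntil hxs)
      have hyx : G.dist y x = 1 := dist_adj hT hxy.symm
      omega
    -- two paths from x to v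
    have hP1 : (p.concat huv).IsPath := isPath_concat hp huv hvp
    have hP2 : (SimpleGraph.Walk.cons hxy q).IsPath := hq.cons hxq
    have := hT.IsAcyclic.path_unique ⟨p.concat huv, hP1⟩ ⟨SimpleGraph.Walk.cons hxy q, hP2⟩
    have hsupp : (p.concat huv).support = (SimpleGraph.Walk.cons hxy q).support := by
      rw [Subtype.mk_eq_mk] at this; rw [this]
    have humem : u ∈ (p.concat huv).support := by
      rw [SimpleGraph.Walk.support_concat]
      simp [List.concat_eq_append]
    rw [hsupp, SimpleGraph.Walk.support_cons] at humem
    rcases List.mem_cons.1 humem with h1 | h1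
    · exact ha0 (by rw [h1]; exact SimpleGraph.dist_self)
    · exact huq h1


/-- discrete IVT along a walk -/
lemma flip_exists {S : V → Prop} : ∀ {a b : V} (p : G.Walk a b), S a → ¬ S b →
    ∃ x y, G.Adj x y ∧ S x ∧ ¬ S y ∧ x ∈ p.support ∧ y ∈ p.support := by
  intro a b p
  induction p with
  | nil => intro h1 h2; exact absurd h1 h2
  | cons h q ih =>
    intro h1 h2
    rename_i u' v' w' -- endpoints
    by_cases hc : S v'
    · obtain ⟨x, y, hxy, hx, hy, hxs, hys⟩ := ih hc h2
      exact ⟨x, y, hxy, hx, hy, by simp [hxs], by simp [hys]⟩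
    · exact ⟨u', v', h, h1, hc, by simp, by simp⟩

/-- T5: on a path between two vertices on the `u`-side of edge `uv`,
all vertices are on the `u`-side. -/
lemma side_const (hT : G.IsTree) {u v : V} (huv : G.Adj u v) :
    ∀ {a b : V} (p : G.Walk a b), p.IsPath →
    G.dist a v = G.dist a u + 1 → G.dist b v = G.dist b u + 1 →
    ∀ w ∈ p.support, G.dist w v = G.dist w u + 1 := by
  intro a b p
  induction p with
  | nil =>
    intro _ ha _ w hw
    simp only [SimpleGraph.Walk.support_nil, List.mem_singleton] at hw
    rwa [hw]
  | cons h q ih =>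
    rename_i a' c' b'
    intro hp ha hb w hw
    simp only [SimpleGraph.Walk.support_cons, List.mem_cons] at hw
    rcases hw with rfl | hw
    · exact ha
    by_cases hc : G.dist c' v = G.dist c' u + 1
    · exact ih hp.of_cons hc hb w hw
    · exfalso
      have hcv : G.dist c' u = G.dist c' v + 1 := by
        rcases dist_succ_or hT huv c' with h1 | h1
        · exact absurd h1 hc
        · exact h1
      -- flip on the first step: a' = u, c' = v
      obtain ⟨hau, hcv'⟩ := cross_edge hT huv h ha hcv
      -- now q goes from v (v-side) to b' (u-side); flip gives u ∈ q.support
      obtain ⟨x, y, hxy, hx, hy, hxs, hys⟩ :=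
        flip_exists (S := fun z => G.dist z u = G.dist z v + 1) q hcv (by omega)
      have hy' : G.dist y v = G.dist y u + 1 := by
        rcases dist_succ_or hT huv y with h1 | h1
        · exact h1
        · exact absurd h1 hy
      obtain ⟨hxv, hyu⟩ := cross_edge hT huv.symm hxy hx hy'
      -- y = u appears in q.support, but also a' = u is the head: contradiction with path
      have hnp := (SimpleGraph.Walk.cons_isPath_iff h q).1 hp
      apply hnp.2
      rw [hau, ← hyu]
      exact hys


variable [Fintype V]

/-- the `u`-side of the edge `uv`, as a finset -/
noncomputable def sideF (G : SimpleGraph V) (u v : V) : Finset V :=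
  Finset.univ.filter fun w => G.dist w u < G.dist w v

lemma mem_sideF {G : SimpleGraph V} {u v z : V} :
    z ∈ sideF G u v ↔ G.dist z u < G.dist z v := by
  simp [sideF]

lemma mem_sideF_iff (hT : G.IsTree) {u v : V} (huv : G.Adj u v) {z : V} :
    z ∈ sideF G u v ↔ G.dist z v = G.dist z u + 1 := by
  rw [mem_sideF]
  rcases dist_succ_or hT huv z with h1 | h1 <;> omega

lemma sideF_card_add (hT : G.IsTree) {u v : V} (huv : G.Adj u v) :
    (sideF G u v).card + (sideF G v u).card = Fintype.card V := by
  have h : sideF G v u = Finset.univ.filter fun w => ¬ G.dist w u < G.dist w v := by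
    ext z
    simp only [mem_sideF, Finset.mem_filter, Finset.mem_univ, true_and]
    rcases dist_succ_or hT huv z with h1 | h1 <;> omega
  rw [h, sideF]
  rw [Finset.card_filter_add_card_filter_not]
  exact Finset.card_univ

/-- sides of distinct edges hanging on the same side are nested -/
lemma nested (hT : G.IsTree) {r₀ u v u' v' : V} (huv : G.Adj u v) (hu'v' : G.Adj u' v')
    (hr : G.dist r₀ v = G.dist r₀ u + 1) (hr' : G.dist r₀ v' = G.dist r₀ u' + 1)
    (hu'S : G.dist u' u = G.dist u' v + 1) (hv'S : G.dist v' u = G.dist v' v + 1) :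
    sideF G v' u' ⊆ sideF G v u := by
  intro z hz
  rw [mem_sideF_iff hT hu'v'.symm] at hz
  rw [mem_sideF_iff hT huv.symm]
  by_contra hzu
  have hzS : G.dist z v = G.dist z u + 1 := by
    rcases dist_succ_or hT huv z with h1 | h1
    · exact h1
    · exact absurd h1 hzu
  obtain ⟨p0⟩ := hT.isConnected z r₀
  set p := (p0.toPath : G.Walk z r₀) with hpdef
  have hp : p.IsPath := p0.toPath.isPath
  -- z is on the v'-side of e', r₀ on the u'-side; flip gives v' ∈ p.support
  obtain ⟨x, y, hxy, hx, hy, hxs, hys⟩ :=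
    flip_exists (S := fun w => G.dist w u' = G.dist w v' + 1) p hz (by omega)
  have hy' : G.dist y v' = G.dist y u' + 1 := by
    rcases dist_succ_or hT hu'v' y with h1 | h1
    · exact h1
    · exact absurd h1 hy
  obtain ⟨hxv, hyu⟩ := cross_edge hT hu'v'.symm hxy hx hy'
  -- v' = x lies on the path, and all of the path is on the u-side of e
  have hall := side_const hT huv p hp hzS hr x hxs
  rw [hxv] at hall
  omega

lemma disjointed (hT : G.IsTree) {u v u' v' : V} (huv : G.Adj u v) (hu'v' : G.Adj u' v')
    (hu'S : G.dist u' v = G.dist u' u + 1) (hvS : G.dist v v' = G.dist v u' + 1) :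
    ∀ z, z ∈ sideF G v u → z ∉ sideF G v' u' := by
  intro z hz hz'
  rw [mem_sideF_iff hT huv.symm] at hz
  rw [mem_sideF_iff hT hu'v'.symm] at hz'
  obtain ⟨p0⟩ := hT.isConnected z v
  set p := (p0.toPath : G.Walk z v) with hpdef
  have hp : p.IsPath := p0.toPath.isPath
  -- flip wrt e' : z on v'-side, v on u'-side
  obtain ⟨x, y, hxy, hx, hy, hxs, hys⟩ :=
    flip_exists (S := fun w => G.dist w u' = G.dist w v' + 1) p hz' (by omega)
  have hy' : G.dist y v' = G.dist y u' + 1 := by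
    rcases dist_succ_or hT hu'v' y with h1 | h1
    · exact h1
    · exact absurd h1 hy
  obtain ⟨hxv, hyu⟩ := cross_edge hT hu'v'.symm hxy hx hy'
  -- all of path z→v is on v-side of e (apply side_const with edge (v,u))
  have hvv : G.dist v u = G.dist v v + 1 := by
    rw [SimpleGraph.dist_self, dist_adj hT huv.symm]
  have hall := side_const hT huv.symm p hp hz hvv y hys
  rw [hyu] at hall
  omega

lemma laminar_main (hT : G.IsTree) {r₀ u v u' v' : V} (huv : G.Adj u v) (hu'v' : G.Adj u' v')
    (hr : G.dist r₀ v = G.dist r₀ u + 1) (hr' : G.dist r₀ v' = G.dist r₀ u' + 1)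
    (hne : s(u, v) ≠ s(u', v')) :
    sideF G v u ⊆ sideF G v' u' ∨ sideF G v' u' ⊆ sideF G v u ∨
      Disjoint (sideF G v u) (sideF G v' u') := by
  have Hside : ∀ z : V, G.dist z v = G.dist z u + 1 ∨ G.dist z u = G.dist z v + 1 :=
    dist_succ_or hT huv
  have Hside' : ∀ z : V, G.dist z v' = G.dist z u' + 1 ∨ G.dist z u' = G.dist z v' + 1 :=
    dist_succ_or hT hu'v'
  rcases Hside u' with hu'U | hu'V
  · -- u' on u-side of e
    rcases Hside v' with hv'U | hv'V
    · -- both u', v' on u-side of e; now look at sides of u, v wrt e'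
      rcases Hside' u with huU' | huV'
      · rcases Hside' v with hvU' | hvV'
        · -- u, v both on u'-side of e' : disjoint
          exact Or.inr (Or.inr (Finset.disjoint_left.2 fun z hz =>
            disjointed hT huv hu'v' hu'U hvU' z hz))
        · -- u u'-side, v v'-side of e' : cross edge, e = e'
          exfalso
          obtain ⟨h1, h2⟩ := cross_edge hT hu'v' huv huU' hvV'
          exact hne (by rw [h1, h2])
      · rcases Hside' v with hvU' | hvV'
        · -- v u'-side, u v'-side : cross edge reversed
          exfalso
          obtain ⟨h1, h2⟩ := cross_edge hT hu'v' huv.symm hvU' huV'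
          apply hne
          rw [h1, h2, Sym2.eq_swap]
        · -- u, v both on v'-side of e' : sideF v u ⊆ sideF v' u'
          exact Or.inl (nested hT hu'v' huv hr' hr huV' hvV')
    · -- u' u-side, v' v-side : cross edge, e' = e
      exfalso
      obtain ⟨h1, h2⟩ := cross_edge hT huv hu'v' hu'U hv'V
      exact hne (by rw [h1, h2])
  · rcases Hside v' with hv'U | hv'V
    · -- v' u-side, u' v-side : cross edge reversed
      exfalso
      obtain ⟨h1, h2⟩ := cross_edge hT huv hu'v'.symm hv'U hu'V
      apply hne
      rw [h1, h2, Sym2.eq_swap]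
    · -- u', v' both on v-side of e : sideF v' u' ⊆ sideF v u
      exact Or.inr (Or.inl (nested hT huv hu'v' hr hr' hu'V hv'V))

lemma side_inj (hT : G.IsTree) {r₀ u v u' v' : V} (huv : G.Adj u v) (hu'v' : G.Adj u' v')
    (hr : G.dist r₀ v = G.dist r₀ u + 1) (hr' : G.dist r₀ v' = G.dist r₀ u' + 1)
    (heq : sideF G v u = sideF G v' u') : s(u, v) = s(u', v') := by
  by_contra hne
  have hv'mem : v' ∈ sideF G v' u' := by
    rw [mem_sideF_iff hT hu'v'.symm]
    rw [SimpleGraph.dist_self, dist_adj hT hu'v'.symm]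
  have hu'mem : u' ∉ sideF G v' u' := by
    rw [mem_sideF_iff hT hu'v'.symm]
    rw [SimpleGraph.dist_self, dist_adj hT hu'v']
    omega
  rw [← heq] at hv'mem hu'mem
  rw [mem_sideF_iff hT huv.symm] at hv'mem
  have hu'U : G.dist u' v = G.dist u' u + 1 := by
    rcases dist_succ_or hT huv u' with h1 | h1
    · exact h1
    · exfalso; apply hu'mem; rw [mem_sideF_iff hT huv.symm]; exact h1
  obtain ⟨h1, h2⟩ := cross_edge hT huv hu'v' hu'U hv'mem
  exact hne (by rw [h1, h2])


/-- Master counting lemma for laminar families with sizes in `[k, c]`. -/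
lemma master (k : ℕ) (hk : 2 ≤ k) :
    ∀ (N : ℕ) (F : Finset (Finset V)) (U : Finset V) (c : ℕ), F.card ≤ N →
      (∀ A ∈ F, A ⊆ U ∧ k ≤ A.card ∧ A.card ≤ c) →
      (∀ A ∈ F, ∀ B ∈ F, A ⊆ B ∨ B ⊆ A ∨ Disjoint A B) →
      (F.card : ℤ) ≤ max 0 (max ((U.card : ℤ) + 2 - 2 * k)
        (min (c : ℤ) (U.card : ℤ) + 1 - k)) := by
  intro N
  induction N with
  | zero =>
    intro F U c hcard _ _
    interval_cases h : F.card
    simp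
  | succ N ih =>
    intro F U c hcard hmem hlam
    rcases Finset.eq_empty_or_nonempty F with rfl | hne
    · simp
    obtain ⟨A, hAF, hAmax⟩ := F.exists_maximal hne
    have hAU : A ⊆ U := (hmem A hAF).1
    have hAk : k ≤ A.card := (hmem A hAF).2.1
    have hAc : A.card ≤ c := (hmem A hAF).2.2
    have hAUcard : A.card ≤ U.card := Finset.card_le_card hAU
    by_cases hall : ∀ B ∈ F, B ⊆ A
    · -- single maximal set
      set F' := F.erase A with hF'
      have hcard' : F.card = F'.card + 1 := by
        rw [hF', Finset.card_erase_of_mem hAF]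
        have : 1 ≤ F.card := Finset.card_pos.2 hne
        omega
      have hbound := ih F' A (A.card - 1) (by omega)
        (fun B hB => by
          have hBF := Finset.mem_of_mem_erase hB
          have hBA : B ⊆ A := hall B hBF
          have hBne : B ≠ A := Finset.ne_of_mem_erase hB
          have : B.card < A.card := Finset.card_lt_card (ssubset_of_subset_of_ne hBA hBne)
          exact ⟨hBA, (hmem B hBF).2.1, by omega⟩)
        (fun B hB C hC =>
          hlam B (Finset.mem_of_mem_erase hB) C (Finset.mem_of_mem_erase hC))
      have h1 : ((A.card - 1 : ℕ) : ℤ) = (A.card : ℤ) - 1 := by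
        have : 1 ≤ A.card := by omega
        push_cast [this]; ring
      rw [h1] at hbound
      omega
    · -- at least two maximal sets
      push_neg at hall
      obtain ⟨B₀, hB₀F, hB₀A⟩ := hall
      set F₁ := F.filter (fun B => B ⊆ A) with hF₁
      set F₂ := F.filter (fun B => ¬ B ⊆ A) with hF₂
      have hsplit : F₁.card + F₂.card = F.card := by
        rw [hF₁, hF₂]; exact Finset.card_filter_add_card_filter_not _
      have hAF₁ : A ∈ F₁ := Finset.mem_filter.2 ⟨hAF, subset_rfl⟩
      have hB₀F₂ : B₀ ∈ F₂ := Finset.mem_filter.2 ⟨hB₀F, hB₀A⟩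
      have hF₁pos : 1 ≤ F₁.card := Finset.card_pos.2 ⟨A, hAF₁⟩
      have hF₂pos : 1 ≤ F₂.card := Finset.card_pos.2 ⟨B₀, hB₀F₂⟩
      -- members of F₂ are disjoint from A
      have hF₂disj : ∀ B ∈ F₂, B ⊆ U \ A := by
        intro B hB
        rw [hF₂, Finset.mem_filter] at hB
        obtain ⟨hBF, hBA⟩ := hB
        rcases hlam A hAF B hBF with h | h | h
        · exfalso
          have : A ≠ B := by rintro rfl; exact hBA subset_rfl
          exact this (le_antisymm h (hAmax hBF h))
        · exact absurd h hBA
        · exact Finset.subset_sdiff.2 ⟨(hmem B hBF).1, (Finset.disjoint_of_subset_right subset_rfl h.symm)⟩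
      have hb1 := ih F₁ A A.card (by omega)
        (fun B hB => by
          rw [hF₁, Finset.mem_filter] at hB
          exact ⟨hB.2, (hmem B hB.1).2.1, Finset.card_le_card hB.2⟩)
        (fun B hB C hC => hlam B (Finset.mem_filter.1 hB).1 C (Finset.mem_filter.1 hC).1)
      have hb2 := ih F₂ (U \ A) c (by omega)
        (fun B hB => ⟨hF₂disj B hB, (hmem B (Finset.mem_filter.1 hB).1).2.1,
          (hmem B (Finset.mem_filter.1 hB).1).2.2⟩)
        (fun B hB C hC => hlam B (Finset.mem_filter.1 hB).1 C (Finset.mem_filter.1 hC).1)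
      have hsd : (U \ A).card = U.card - A.card := Finset.card_sdiff_of_subset hAU
      rw [hsd] at hb2
      have h2 : ((U.card - A.card : ℕ) : ℤ) = (U.card : ℤ) - A.card := by
        push_cast [hAUcard]; ring
      rw [h2] at hb2
      omega


lemma side_eq_sideF {u v : V} : side G u v = (sideF G u v).card := rfl

lemma muE_mk_s15 {u v : V} : muE G s(u, v) = mu G u v := rfl

lemma mu_le_half (G : SimpleGraph V) (u v : V) : 2 * mu G u v ≤ Fintype.card V := by
  have hd : Disjoint (sideF G u v) (sideF G v u) := by
    rw [Finset.disjoint_left]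
    intro z hz hz'
    rw [mem_sideF] at hz hz'
    omega
  have := Finset.card_union_of_disjoint hd
  have hle : (sideF G u v ∪ sideF G v u).card ≤ Fintype.card V := by
    rw [← Finset.card_univ]
    exact Finset.card_le_card (Finset.subset_univ _)
  have h1 : side G u v = (sideF G u v).card := rfl
  have h2 : side G v u = (sideF G v u).card := rfl
  unfold mu
  omega

lemma mu_pos (hT : G.IsTree) {u v : V} (huv : G.Adj u v) : 1 ≤ mu G u v := by
  have h1 : u ∈ sideF G u v := by
    rw [mem_sideF, SimpleGraph.dist_self, dist_adj hT huv]
    omega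
  have h2 : v ∈ sideF G v u := by
    rw [mem_sideF, SimpleGraph.dist_self, dist_adj hT huv.symm]
    omega
  have c1 : 1 ≤ (sideF G u v).card := Finset.card_pos.2 ⟨u, h1⟩
  have c2 : 1 ≤ (sideF G v u).card := Finset.card_pos.2 ⟨v, h2⟩
  unfold mu
  rw [side_eq_sideF, side_eq_sideF]
  omega

/-- tail sums count edges with `muE` in the window. -/
lemma tailSum_eq_card (G : SimpleGraph V) (n k : ℕ) :
    tailSum G n k = (Finset.univ.filter fun e : Sym2 V =>
      e ∈ G.edgeSet ∧ muE G e ∈ Finset.Icc k (n / 2)).card := by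
  unfold tailSum r
  rw [Finset.card_eq_sum_card_fiberwise (f := muE G) (t := Finset.Icc k (n / 2))
    (fun e he => ((Finset.mem_filter.1 he).2).2)]
  apply Finset.sum_congr rfl
  intro b hb
  congr 1
  ext e
  constructor
  · intro h
    have h' := Finset.mem_filter.1 h
    exact Finset.mem_filter.2 ⟨Finset.mem_filter.2
      ⟨Finset.mem_univ _, h'.2.1, h'.2.2 ▸ hb⟩, h'.2.2⟩
  · intro h
    have h' := Finset.mem_filter.1 h
    have h'' := Finset.mem_filter.1 h'.1
    exact Finset.mem_filter.2 ⟨Finset.mem_univ _, h''.2.1, h'.2⟩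

/-- orientation of an edge away from the root -/
lemma edge_orient (hT : G.IsTree) (r₀ : V) {e : Sym2 V} (he : e ∈ G.edgeSet) :
    ∃ u v, e = s(u, v) ∧ G.Adj u v ∧ G.dist r₀ v = G.dist r₀ u + 1 := by
  induction e with
  | _ x y =>
    rw [SimpleGraph.mem_edgeSet] at he
    rcases dist_succ_or hT he r₀ with h1 | h1
    · exact ⟨x, y, rfl, he, h1⟩
    · exact ⟨y, x, Sym2.eq_swap.symm, he.symm, h1⟩

/-- the small (far-from-root) side of an edge, as a function on `Sym2 V` -/
noncomputable def Dmap (G : SimpleGraph V) [Fintype V] (r₀ : V) : Sym2 V → Finset V :=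
  Sym2.lift ⟨fun u v =>
    if G.dist r₀ u < G.dist r₀ v then sideF G v u
    else if G.dist r₀ v < G.dist r₀ u then sideF G u v else ∅, by
      intro u v
      dsimp only
      rcases lt_trichotomy (G.dist r₀ u) (G.dist r₀ v) with h | h | h
      · rw [if_pos h, if_neg (asymm h), if_pos h]
      · rw [if_neg (by omega), if_neg (by omega), if_neg (by omega), if_neg (by omega)]
      · rw [if_neg (asymm h), if_pos h, if_pos h]⟩

lemma Dmap_eq {r₀ u v : V} (hr : G.dist r₀ v = G.dist r₀ u + 1) :
    Dmap G r₀ s(u, v) = sideF G v u := by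
  unfold Dmap
  rw [Sym2.lift_mk]
  dsimp only
  rw [if_pos (by omega)]

/-- the main counting bound: at most `n + 1 - 2k` edges with `muE ≥ k`. -/
lemma count_bound (hT : G.IsTree) (k : ℕ) (hk2 : 2 ≤ k) (hkn : 2 * k ≤ Fintype.card V) :
    (Finset.univ.filter fun e : Sym2 V => e ∈ G.edgeSet ∧ k ≤ muE G e).card + 2 * k
      ≤ Fintype.card V + 1 := by
  have hpos : 0 < Fintype.card V := by omega
  have : Nonempty V := Fintype.card_pos_iff.1 hpos
  set n := Fintype.card V with hn
  obtain ⟨r₀⟩ := ‹Nonempty V›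
  set S := Finset.univ.filter fun e : Sym2 V => e ∈ G.edgeSet ∧ k ≤ muE G e with hS
  -- basic properties of Dmap on S
  have key : ∀ e ∈ S, ∃ u v, e = s(u, v) ∧ G.Adj u v ∧ G.dist r₀ v = G.dist r₀ u + 1 ∧
      Dmap G r₀ e = sideF G v u ∧ k ≤ (sideF G v u).card ∧ (sideF G v u).card ≤ n - k ∧
      sideF G v u ⊆ Finset.univ.erase r₀ := by
    intro e he
    rw [hS, Finset.mem_filter] at he
    obtain ⟨-, heE, hek⟩ := he
    obtain ⟨u, v, rfl, huv, hr⟩ := edge_orient hT r₀ heE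
    have hmu : muE G s(u, v) = min (sideF G u v).card (sideF G v u).card := rfl
    have hsum := sideF_card_add hT huv
    refine ⟨u, v, rfl, huv, hr, Dmap_eq hr, by omega, by omega, ?_⟩
    intro z hz
    rw [Finset.mem_erase]
    refine ⟨?_, Finset.mem_univ _⟩
    rintro rfl
    rw [mem_sideF] at hz
    omega
  have hinj : Set.InjOn (Dmap G r₀) S := by
    intro e1 h1 e2 h2 heq
    obtain ⟨u, v, rfl, huv, hr, hD, -, -, -⟩ := key e1 h1
    obtain ⟨u', v', rfl, hu'v', hr', hD', -, -, -⟩ := key e2 h2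
    rw [hD, hD'] at heq
    exact side_inj hT huv hu'v' hr hr' heq
  set F := S.image (Dmap G r₀) with hF
  have hFcard : F.card = S.card := Finset.card_image_of_injOn hinj
  have hmast := master k hk2 F.card F (Finset.univ.erase r₀) (n - k) le_rfl
    (by
      intro A hA
      obtain ⟨e, he, rfl⟩ := Finset.mem_image.1 hA
      obtain ⟨u, v, rfl, huv, hr, hD, hk1, hk2', hsub⟩ := key e he
      rw [hD]
      exact ⟨hsub, hk1, hk2'⟩)
    (by
      intro A hA B hB
      obtain ⟨e1, he1, rfl⟩ := Finset.mem_image.1 hA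
      obtain ⟨e2, he2, rfl⟩ := Finset.mem_image.1 hB
      by_cases hee : e1 = e2
      · rw [hee]; exact Or.inl subset_rfl
      obtain ⟨u, v, rfl, huv, hr, hD, -, -, -⟩ := key e1 he1
      obtain ⟨u', v', rfl, hu'v', hr', hD', -, -, -⟩ := key e2 he2
      rw [hD, hD']
      exact laminar_main hT huv hu'v' hr hr' hee)
  have hercard : (Finset.univ.erase r₀).card = n - 1 := by
    rw [Finset.card_erase_of_mem (Finset.mem_univ _), Finset.card_univ]
  rw [hercard] at hmast
  have c1 : ((n - 1 : ℕ) : ℤ) = (n : ℤ) - 1 := by push_cast [show 1 ≤ n by omega]; ring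
  have c2 : ((n - k : ℕ) : ℤ) = (n : ℤ) - k := by push_cast [show k ≤ n by omega]; ring
  rw [c1, c2] at hmast
  rw [hFcard] at hmast
  omega


/-! ### upper bound for trees -/

lemma muE_bounds (hT : G.IsTree) {e : Sym2 V} (he : e ∈ G.edgeSet) :
    1 ≤ muE G e ∧ 2 * muE G e ≤ Fintype.card V := by
  induction e with
  | _ x y =>
    rw [SimpleGraph.mem_edgeSet] at he
    exact ⟨mu_pos hT he, mu_le_half G x y⟩

lemma edgeFinset_eq_filter (G : SimpleGraph V) :
    G.edgeFinset = Finset.univ.filter fun e : Sym2 V => e ∈ G.edgeSet := by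
  ext e
  simp [SimpleGraph.mem_edgeFinset]

lemma tree_tailSum_le (hT : G.IsTree) (k : ℕ) (hk1 : 1 ≤ k) (hk2 : k ≤ Fintype.card V / 2) :
    tailSum G (Fintype.card V) k + 2 * k ≤ Fintype.card V + 1 := by
  have hcV := hT.card_edgeFinset
  rw [tailSum_eq_card]
  by_cases hk : 2 ≤ k
  · have hb := count_bound hT k hk (by omega)
    have hsub : (Finset.univ.filter fun e : Sym2 V =>
        e ∈ G.edgeSet ∧ muE G e ∈ Finset.Icc k (Fintype.card V / 2)) ⊆
        Finset.univ.filter fun e : Sym2 V => e ∈ G.edgeSet ∧ k ≤ muE G e := by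
      intro e he
      have h' := Finset.mem_filter.1 he
      exact Finset.mem_filter.2 ⟨Finset.mem_univ _, h'.2.1, (Finset.mem_Icc.1 h'.2.2).1⟩
    have := Finset.card_le_card hsub
    omega
  · have hk1' : k = 1 := by omega
    subst hk1'
    have hsub : (Finset.univ.filter fun e : Sym2 V =>
        e ∈ G.edgeSet ∧ muE G e ∈ Finset.Icc 1 (Fintype.card V / 2)) ⊆ G.edgeFinset := by
      intro e he
      rw [SimpleGraph.mem_edgeFinset]
      exact (Finset.mem_filter.1 he).2.1
    have := Finset.card_le_card hsub
    omega

/-- for any tree, `tailSum` at `k = 1` counts all the edges -/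
lemma tree_tailSum_one (hT : G.IsTree) :
    Fintype.card V ≤ tailSum G (Fintype.card V) 1 + 1 := by
  have hcV := hT.card_edgeFinset
  rw [tailSum_eq_card]
  have hsub : G.edgeFinset ⊆ Finset.univ.filter fun e : Sym2 V =>
      e ∈ G.edgeSet ∧ muE G e ∈ Finset.Icc 1 (Fintype.card V / 2) := by
    intro e he
    rw [SimpleGraph.mem_edgeFinset] at he
    obtain ⟨h1, h2⟩ := muE_bounds hT he
    exact Finset.mem_filter.2 ⟨Finset.mem_univ _, he, Finset.mem_Icc.2 ⟨h1, by omega⟩⟩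
  have := Finset.card_le_card hsub
  omega

/-! ### the star -/

lemma starG_adj {n : ℕ} {x y : Fin n} :
    (starG n).Adj x y ↔ x ≠ y ∧ ((x : ℕ) = 0 ∨ (y : ℕ) = 0) := by
  constructor
  · intro h
    rw [starG, SimpleGraph.fromRel_adj] at h
    exact ⟨h.1, h.2⟩
  · intro h
    rw [starG, SimpleGraph.fromRel_adj]
    exact ⟨h.1, h.2⟩

lemma star_side_le_one {n : ℕ} {x z : Fin n} (hx : (x : ℕ) ≠ 0) (hz : (z : ℕ) = 0) :
    side (starG n) x z ≤ 1 := by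
  have hsub : (Finset.univ.filter fun w => (starG n).dist w x < (starG n).dist w z) ⊆ {x} := by
    intro w hw
    have hd := (Finset.mem_filter.1 hw).2
    rw [Finset.mem_singleton]
    by_contra hwx
    have hzx : (starG n).Adj z x := starG_adj.2 ⟨fun h => hx (h ▸ hz), Or.inl hz⟩
    have hdz : (starG n).dist w z ≠ 0 := by omega
    have hrz : (starG n).Reachable w z := SimpleGraph.Reachable.of_dist_ne_zero hdz
    have hrx : (starG n).Reachable w x := hrz.trans hzx.reachable
    have hdx : 0 < (starG n).dist w x := hrx.pos_dist_of_ne hwx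
    obtain ⟨p, hp⟩ := hrx.exists_walk_length_eq_dist
    obtain ⟨c, hadj, q, hq⟩ := SimpleGraph.Walk.exists_eq_cons_of_ne (Ne.symm hwx) p.reverse
    have hc0 : (c : ℕ) = 0 := by
      rcases (starG_adj.1 hadj).2 with h | h
      · exact absurd h hx
      · exact h
    have hcz : c = z := Fin.ext (by rw [hc0, hz])
    have hlen : q.length + 1 = (starG n).dist w x := by
      have h1 : p.reverse.length = p.length := SimpleGraph.Walk.length_reverse p
      rw [hq] at h1
      rw [SimpleGraph.Walk.length_cons] at h1
      omega
    have hdwc : (starG n).dist w c ≤ q.length := by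
      have h := SimpleGraph.dist_le q.reverse
      rwa [SimpleGraph.Walk.length_reverse] at h
    rw [← hcz] at hd
    omega
  have := Finset.card_le_card hsub
  simpa [side] using this

lemma star_muE_le_one {n : ℕ} {e : Sym2 (Fin n)} (he : e ∈ (starG n).edgeSet) :
    muE (starG n) e ≤ 1 := by
  induction e with
  | _ x y =>
    rw [SimpleGraph.mem_edgeSet] at he
    obtain ⟨hxy, h0⟩ := starG_adj.1 he
    rcases h0 with h | h
    · -- x is the center : use side y x
      have hy : (y : ℕ) ≠ 0 := fun hy => hxy (Fin.ext (by rw [h, hy]))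
      calc muE (starG n) s(x, y) ≤ side (starG n) y x := min_le_right _ _
        _ ≤ 1 := star_side_le_one hy h
    · have hx : (x : ℕ) ≠ 0 := fun hx => hxy (Fin.ext (by rw [h, hx]))
      calc muE (starG n) s(x, y) ≤ side (starG n) x y := min_le_left _ _
        _ ≤ 1 := star_side_le_one hx h

lemma star_tailSum_hi (n k : ℕ) (hk : 2 ≤ k) : tailSum (starG n) n k = 0 := by
  rw [tailSum_eq_card]
  rw [Finset.card_eq_zero]
  rw [Finset.eq_empty_iff_forall_notMem]
  intro e he
  have h' := (Finset.mem_filter.1 he).2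
  have h1 := star_muE_le_one h'.1
  have h2 := (Finset.mem_Icc.1 h'.2).1
  omega

lemma star_tailSum_lo (n : ℕ) (hn : 1 ≤ n) (k : ℕ) : tailSum (starG n) n k + 1 ≤ n := by
  rw [tailSum_eq_card]
  have hz : (0 : ℕ) < n := hn
  set z : Fin n := ⟨0, hz⟩ with hzdef
  have hsub : (Finset.univ.filter fun e : Sym2 (Fin n) =>
      e ∈ (starG n).edgeSet ∧ muE (starG n) e ∈ Finset.Icc k (n / 2)) ⊆
      (Finset.univ.erase z).image fun a => s(z, a) := by
    intro e he
    have h' := (Finset.mem_filter.1 he).2.1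
    induction e with
    | _ x y =>
      rw [SimpleGraph.mem_edgeSet] at h'
      obtain ⟨hxy, h0⟩ := starG_adj.1 h'
      rcases h0 with h | h
      · have hx : x = z := Fin.ext h
        refine Finset.mem_image.2 ⟨y, Finset.mem_erase.2 ⟨?_, Finset.mem_univ _⟩, by rw [hx]⟩
        rintro rfl
        exact hxy (by rw [hx])
      · have hy : y = z := Fin.ext h
        refine Finset.mem_image.2 ⟨x, Finset.mem_erase.2 ⟨?_, Finset.mem_univ _⟩, ?_⟩
        · rintro rfl
          exact hxy (by rw [hy])
        · rw [hy, Sym2.eq_swap]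
  have h1 := Finset.card_le_card hsub
  have h2 := Finset.card_image_le (s := Finset.univ.erase z) (f := fun a => s(z, a))
  have h3 : (Finset.univ.erase z).card = n - 1 := by
    rw [Finset.card_erase_of_mem (Finset.mem_univ _), Finset.card_univ, Fintype.card_fin]
  omega


/-! ### the path -/

lemma pathG_adj {n : ℕ} {x y : Fin n} :
    (pathG n).Adj x y ↔ x ≠ y ∧ ((x : ℕ) + 1 = y ∨ (y : ℕ) + 1 = x) := by
  constructor
  · intro h
    rw [pathG, SimpleGraph.fromRel_adj] at h
    exact ⟨h.1, h.2⟩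
  · intro h
    rw [pathG, SimpleGraph.fromRel_adj]
    exact ⟨h.1, h.2⟩

lemma path_walk {n : ℕ} : ∀ (m : ℕ) (i : Fin n) (h : (i : ℕ) + m < n),
    ∃ w : (pathG n).Walk i ⟨(i : ℕ) + m, h⟩, w.length = m := by
  intro m
  induction m with
  | zero =>
    intro i h
    have he : i = (⟨(i : ℕ) + 0, h⟩ : Fin n) := Fin.ext (by simp)
    exact ⟨(SimpleGraph.Walk.nil' i).copy rfl he, by simp⟩
  | succ m ih =>
    intro i h
    have h' : (i : ℕ) + m < n := by omega
    obtain ⟨w, hw⟩ := ih i h'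
    have hadj : (pathG n).Adj ⟨(i : ℕ) + m, h'⟩ ⟨(i : ℕ) + (m + 1), h⟩ := by
      rw [pathG_adj]
      constructor
      · intro hc
        have := congrArg Fin.val hc
        simp only at this
        omega
      · left; simp; omega
    exact ⟨w.concat hadj, by rw [SimpleGraph.Walk.length_concat, hw]⟩

lemma path_walk_ge {n : ℕ} : ∀ {i j : Fin n} (p : (pathG n).Walk i j),
    Nat.dist (i : ℕ) (j : ℕ) ≤ p.length := by
  intro i j p
  induction p with
  | nil => simp [Nat.dist]
  | cons h q ih =>
    rename_i a c b
    have hadj := (pathG_adj.1 h).2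
    rw [SimpleGraph.Walk.length_cons]
    simp only [Nat.dist] at *
    omega

lemma path_dist {n : ℕ} (i j : Fin n) :
    (pathG n).dist i j = Nat.dist (i : ℕ) (j : ℕ) := by
  have hub : ∀ (a b : Fin n), (a : ℕ) ≤ (b : ℕ) → (pathG n).dist a b ≤ (b : ℕ) - (a : ℕ) := by
    intro a b hab
    obtain ⟨w, hw⟩ := path_walk ((b : ℕ) - (a : ℕ)) a (by omega)
    have he : (⟨(a : ℕ) + ((b : ℕ) - (a : ℕ)), by omega⟩ : Fin n) = b := Fin.ext (by simp; omega)
    have hd : (pathG n).dist a ⟨(a : ℕ) + ((b : ℕ) - (a : ℕ)), by omega⟩ ≤ (b : ℕ) - (a : ℕ) := by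
      calc (pathG n).dist a _ ≤ w.length := SimpleGraph.dist_le w
        _ = _ := hw
    rwa [he] at hd
  have hle : (pathG n).dist i j ≤ Nat.dist (i : ℕ) (j : ℕ) := by
    rcases le_total (i : ℕ) (j : ℕ) with h | h
    · have := hub i j h
      simp only [Nat.dist]
      omega
    · have := hub j i h
      rw [SimpleGraph.dist_comm]
      simp only [Nat.dist]
      omega
  have hge : Nat.dist (i : ℕ) (j : ℕ) ≤ (pathG n).dist i j := by
    have hre : (pathG n).Reachable i j := by
      rcases le_total (i : ℕ) (j : ℕ) with h | h
      · obtain ⟨w, hw⟩ := path_walk ((j : ℕ) - (i : ℕ)) i (by omega)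
        have he : (⟨(i : ℕ) + ((j : ℕ) - (i : ℕ)), by omega⟩ : Fin n) = j :=
          Fin.ext (by simp; omega)
        have : (pathG n).Reachable i ⟨(i : ℕ) + ((j : ℕ) - (i : ℕ)), by omega⟩ := ⟨w⟩
        rwa [he] at this
      · obtain ⟨w, hw⟩ := path_walk ((i : ℕ) - (j : ℕ)) j (by omega)
        have he : (⟨(j : ℕ) + ((i : ℕ) - (j : ℕ)), by omega⟩ : Fin n) = i :=
          Fin.ext (by simp; omega)
        have : (pathG n).Reachable j ⟨(j : ℕ) + ((i : ℕ) - (j : ℕ)), by omega⟩ := ⟨w⟩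
        rw [he] at this
        exact this.symm
    obtain ⟨p, hp⟩ := hre.exists_walk_length_eq_dist
    rw [← hp]
    exact path_walk_ge p
  omega

lemma fin_card_filter_ge {n m : ℕ} (hm : m ≤ n) (P : Fin n → Prop) [DecidablePred P]
    (hP : ∀ w : Fin n, (w : ℕ) < m → P w) :
    m ≤ (Finset.univ.filter P).card := by
  rcases Nat.eq_zero_or_pos m with rfl | hm0
  · omega
  have hn0 : 0 < n := by omega
  calc m = (Finset.range m).card := (Finset.card_range m).symm
    _ ≤ _ := by
      apply Finset.card_le_card_of_injOn (f := fun a : ℕ => (⟨min a (n - 1), by omega⟩ : Fin n))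
      · intro a ha
        rw [Finset.mem_coe, Finset.mem_range] at ha
        refine Finset.mem_filter.2 ⟨Finset.mem_univ _, ?_⟩
        apply hP
        simp only
        omega
      · intro a ha b hb hab
        simp only [Finset.coe_range, Set.mem_Iio] at ha hb
        have := congrArg Fin.val hab
        simp only at this
        omega

lemma fin_card_filter_ge_tail {n m : ℕ} (hm : m ≤ n) (P : Fin n → Prop) [DecidablePred P]
    (hP : ∀ w : Fin n, n - m ≤ (w : ℕ) → P w) :
    m ≤ (Finset.univ.filter P).card := by
  rcases Nat.eq_zero_or_pos m with rfl | hm0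
  · omega
  have hn0 : 0 < n := by omega
  calc m = (Finset.range m).card := (Finset.card_range m).symm
    _ ≤ _ := by
      apply Finset.card_le_card_of_injOn (f := fun a : ℕ => (⟨n - 1 - a, by omega⟩ : Fin n))
      · intro a ha
        rw [Finset.mem_coe, Finset.mem_range] at ha
        refine Finset.mem_filter.2 ⟨Finset.mem_univ _, ?_⟩
        apply hP
        simp only
        omega
      · intro a ha b hb hab
        simp only [Finset.coe_range, Set.mem_Iio] at ha hb
        have := congrArg Fin.val hab
        simp only at this
        omega

lemma path_tailSum_ge (n k : ℕ) (hk1 : 1 ≤ k) (hk2 : k ≤ n / 2) :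
    n + 1 ≤ tailSum (pathG n) n k + 2 * k := by
  have hkn : 2 * k ≤ n := by omega
  rw [tailSum_eq_card]
  have hmem : ∀ j < n - 2 * k + 1, ∀ (h1 : k - 1 + j < n) (h2 : k + j < n),
      s((⟨k - 1 + j, h1⟩ : Fin n), (⟨k + j, h2⟩ : Fin n)) ∈
        Finset.univ.filter (fun e : Sym2 (Fin n) =>
          e ∈ (pathG n).edgeSet ∧ muE (pathG n) e ∈ Finset.Icc k (n / 2)) := by
    intro j hj h1 h2
    set u : Fin n := ⟨k - 1 + j, h1⟩ with hu
    set v : Fin n := ⟨k + j, h2⟩ with hv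
    have hadj : (pathG n).Adj u v := by
      rw [pathG_adj]
      constructor
      · intro hc
        have := congrArg Fin.val hc
        simp only [hu, hv] at this
        omega
      · left
        simp only [hu, hv]
        omega
    have hs1 : k ≤ side (pathG n) u v := by
      unfold side
      apply fin_card_filter_ge (m := k) (by omega)
      intro w hw
      rw [path_dist, path_dist]
      simp only [hu, hv, Nat.dist, Fin.val_mk]
      omega
    have hs2 : k ≤ side (pathG n) v u := by
      have hb : k ≤ n - k - j := by omega
      apply le_trans hb
      unfold side
      apply fin_card_filter_ge_tail (m := n - k - j) (by omega)
      intro w hw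
      rw [path_dist, path_dist]
      simp only [hu, hv, Nat.dist, Fin.val_mk]
      omega
    have hmu : muE (pathG n) s(u, v) = mu (pathG n) u v := rfl
    have hhalf := mu_le_half (pathG n) u v
    rw [Fintype.card_fin] at hhalf
    refine Finset.mem_filter.2 ⟨Finset.mem_univ _, ?_, ?_⟩
    · rw [SimpleGraph.mem_edgeSet]
      exact hadj
    · rw [hmu]
      rw [Finset.mem_Icc]
      unfold mu at *
      omega
  -- now count via an injection from range (n - 2k + 1)
  have hinj : n - 2 * k + 1 ≤ (Finset.univ.filter (fun e : Sym2 (Fin n) =>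
      e ∈ (pathG n).edgeSet ∧ muE (pathG n) e ∈ Finset.Icc k (n / 2))).card := by
    calc n - 2 * k + 1 = (Finset.range (n - 2 * k + 1)).card := (Finset.card_range _).symm
      _ ≤ _ := ?_
    apply Finset.card_le_card_of_injOn
      (f := fun j => s((⟨min (k - 1 + j) (n - 1), by omega⟩ : Fin n),
        (⟨min (k + j) (n - 1), by omega⟩ : Fin n)))
    · intro j hj
      rw [Finset.mem_coe, Finset.mem_range] at hj
      have h1 : k - 1 + j < n := by omega
      have h2 : k + j < n := by omega
      have e1 : (⟨min (k - 1 + j) (n - 1), by omega⟩ : Fin n) = ⟨k - 1 + j, h1⟩ :=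
        Fin.ext (by simp only [Fin.val_mk]; omega)
      have e2 : (⟨min (k + j) (n - 1), by omega⟩ : Fin n) = ⟨k + j, h2⟩ :=
        Fin.ext (by simp only [Fin.val_mk]; omega)
      rw [Finset.mem_coe]
      dsimp only
      rw [e1, e2]
      exact hmem j hj h1 h2
    · intro a ha b hb hab
      simp only [Finset.coe_range, Set.mem_Iio] at ha hb
      rw [Sym2.eq_iff] at hab
      rcases hab with ⟨hx, hy⟩ | ⟨hx, hy⟩
      · have h1 := congrArg Fin.val hx
        simp only [Fin.val_mk] at h1
        omega
      · have h1 := congrArg Fin.val hx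
        have h2 := congrArg Fin.val hy
        simp only [Fin.val_mk] at h1 h2
        omega
  omega


/-- For every tree `T` on `n` vertices, `S_n ⪯ T ⪯ P_n`. -/
theorem stmt15 {V : Type*} [Fintype V] (G : SimpleGraph V) (hT : G.IsTree) :
    Preceq (Fintype.card V) (starG (Fintype.card V)) G ∧
    Preceq (Fintype.card V) G (pathG (Fintype.card V)) := by
  constructor
  · intro k hk1 hk2
    by_cases hk : 2 ≤ k
    · rw [star_tailSum_hi _ _ hk]
      exact Nat.zero_le _
    · have hk1' : k = 1 := by omega
      subst hk1'
      have hn2 : 2 ≤ Fintype.card V := by omega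
      have h1 := star_tailSum_lo (Fintype.card V) (by omega) 1
      have h2 := tree_tailSum_one hT
      omega
  · intro k hk1 hk2
    have h1 := tree_tailSum_le hT k hk1 hk2
    have h2 := path_tailSum_ge (Fintype.card V) k hk1 hk2
    omega

end TreeOrder
end

section
/- Let n ≥ 2, let f : {1, …, ⌊n/2⌋} → ℝ be a nondecreasing function, and for a tree T on n vertices define F(T) = Σ_{e ∈ E(T)} f(μ_T(e)). If T and T' are trees on n vertices with T ⪯ T', then F(T) ≤ F(T'); moreover, if f is strictly increasing and T ≺ T', then F(T) < F(T'). -/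
namespace TreeOrder

attribute [local instance] Classical.propDecidable

variable {V : Type*} {W : Type*}

/-- The edge additive eccentric topological index `F(G) = Σ_{e ∈ E(G)} f(μ(e))`. -/
noncomputable def Fidx {V : Type*} [Fintype V] (f : ℕ → ℝ) (G : SimpleGraph V) : ℝ :=
  ∑ e ∈ Finset.univ.filter (fun e : Sym2 V => e ∈ G.edgeSet), f (muE G e)


section Aux
variable {V : Type*} {G : SimpleGraph V}

lemma path_length_eq (hG : G.IsTree) {w x : V} (p : G.Walk w x) (hp : p.IsPath) :
    p.length = G.dist w x := by
  obtain ⟨q, hq, hql⟩ := hG.isConnected.exists_path_of_dist w x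
  have := SimpleGraph.isAcyclic_iff_path_unique.mp hG.IsAcyclic
    (⟨p, hp⟩ : G.Path w x) ⟨q, hq⟩
  rw [← hql]
  exact congrArg SimpleGraph.Walk.length (congrArg Subtype.val this)

lemma dist_adj_cases (hG : G.IsTree) {u v : V} (hadj : G.Adj u v) (w : V) :
    G.dist w v = G.dist w u + 1 ∨ G.dist w u = G.dist w v + 1 := by
  obtain ⟨p, hp, hpl⟩ := hG.isConnected.exists_path_of_dist w u
  by_cases hv : v ∈ p.support
  · right
    have ht : (p.takeUntil v hv).IsPath := hp.takeUntil hv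
    have hd : (p.dropUntil v hv).IsPath := hp.dropUntil hv
    have hlen : (p.takeUntil v hv).length + (p.dropUntil v hv).length = p.length := by
      have := congrArg SimpleGraph.Walk.length (p.take_spec hv)
      rwa [SimpleGraph.Walk.length_append] at this
    have h1 : (p.dropUntil v hv).length = 1 := by
      have he : (SimpleGraph.Walk.cons hadj.symm SimpleGraph.Walk.nil : G.Walk v u).IsPath := by
        simp [hadj.ne']
      have := SimpleGraph.isAcyclic_iff_path_unique.mp hG.IsAcyclic
        (⟨p.dropUntil v hv, hd⟩ : G.Path v u) ⟨_, he⟩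
      have := congrArg SimpleGraph.Walk.length (congrArg Subtype.val this)
      simpa using this
    have h2 : (p.takeUntil v hv).length = G.dist w v := path_length_eq hG _ ht
    omega
  · left
    have hc : (p.concat hadj).IsPath := by
      rw [← SimpleGraph.Walk.isPath_reverse_iff, SimpleGraph.Walk.reverse_concat]
      exact (hp.reverse).cons (by simpa using hv)
    have := path_length_eq hG _ hc
    rw [SimpleGraph.Walk.length_concat] at this
    omega

lemma side_add_side [Fintype V] (hG : G.IsTree) {u v : V} (hadj : G.Adj u v) :
    side G u v + side G v u = Fintype.card V := by
  have key : (Finset.univ.filter fun w => G.dist w v < G.dist w u)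
      = Finset.univ.filter (fun w => ¬ G.dist w u < G.dist w v) := by
    ext w
    simp only [Finset.mem_filter, Finset.mem_univ, true_and]
    rcases dist_adj_cases hG hadj w with h | h <;> omega
  rw [side, side, key, Finset.card_filter_add_card_filter_not, Finset.card_univ]

lemma mu_bounds [Fintype V] (hG : G.IsTree) {u v : V} (hadj : G.Adj u v) :
    1 ≤ mu G u v ∧ mu G u v ≤ Fintype.card V / 2 := by
  have hsum := side_add_side hG hadj
  have h1 : 1 ≤ side G u v := by
    rw [side]
    refine Finset.card_pos.mpr ⟨u, ?_⟩
    simp only [Finset.mem_filter, Finset.mem_univ, true_and, SimpleGraph.dist_self]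
    rw [SimpleGraph.dist_eq_one_iff_adj.mpr hadj]; omega
  have h2 : 1 ≤ side G v u := by
    rw [side]
    refine Finset.card_pos.mpr ⟨v, ?_⟩
    simp only [Finset.mem_filter, Finset.mem_univ, true_and, SimpleGraph.dist_self]
    rw [SimpleGraph.dist_eq_one_iff_adj.mpr hadj.symm]; omega
  constructor
  · exact le_min h1 h2
  · rw [mu, Nat.le_div_iff_mul_le (by norm_num)]
    omega

lemma muE_mem [Fintype V] (hG : G.IsTree) :
    ∀ e ∈ Finset.univ.filter (fun e : Sym2 V => e ∈ G.edgeSet),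
      muE G e ∈ Finset.Icc 1 (Fintype.card V / 2) := by
  intro e he
  rw [Finset.mem_filter] at he
  induction e with
  | _ u v =>
    have hadj : G.Adj u v := he.2
    have := mu_bounds hG hadj
    simp only [muE, Sym2.lift_mk, Finset.mem_Icc]
    exact this

lemma Fidx_eq [Fintype V] (hG : G.IsTree) (f : ℕ → ℝ) :
    Fidx f G = ∑ i ∈ Finset.Icc 1 (Fintype.card V / 2), (r G i : ℝ) * f i := by
  rw [Fidx, ← Finset.sum_fiberwise_of_maps_to (muE_mem hG) (fun e => f (muE G e))]
  apply Finset.sum_congr rfl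
  intro i _
  have hfe : ∀ e ∈ (Finset.univ.filter fun e : Sym2 V => e ∈ G.edgeSet).filter
      (fun e => muE G e = i), f (muE G e) = f i := by
    intro e he
    rw [Finset.mem_filter] at he
    rw [he.2]
  rw [Finset.sum_congr rfl hfe, Finset.sum_const, nsmul_eq_mul]
  congr 2
  rw [r, Finset.filter_filter]

lemma sum_r [Fintype V] (hG : G.IsTree) :
    ∑ i ∈ Finset.Icc 1 (Fintype.card V / 2), r G i = Fintype.card V - 1 := by
  have h1 : (Finset.univ.filter fun e : Sym2 V => e ∈ G.edgeSet).card
      = ∑ i ∈ Finset.Icc 1 (Fintype.card V / 2),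
        ((Finset.univ.filter fun e : Sym2 V => e ∈ G.edgeSet).filter
          (fun e => muE G e = i)).card :=
    Finset.card_eq_sum_card_fiberwise (muE_mem hG)
  have h2 : (Finset.univ.filter fun e : Sym2 V => e ∈ G.edgeSet) = G.edgeFinset := by
    ext e; simp [SimpleGraph.mem_edgeFinset]
  rw [h2] at h1
  have h3 := hG.card_edgeFinset
  have h4 : ∑ i ∈ Finset.Icc 1 (Fintype.card V / 2), r G i
      = ∑ i ∈ Finset.Icc 1 (Fintype.card V / 2),
        (G.edgeFinset.filter (fun e => muE G e = i)).card := by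
    apply Finset.sum_congr rfl
    intro i _
    rw [r, ← h2, Finset.filter_filter]
  omega

lemma telAux (f : ℕ → ℝ) : ∀ i, 1 ≤ i →
    ∑ k ∈ Finset.Icc 2 i, (f k - f (k-1)) = f i - f 1 := by
  intro i hi
  induction i, hi using Nat.le_induction with
  | base => simp
  | succ i hi ih =>
    rw [Finset.sum_Icc_succ_top (by omega), ih]
    simp

lemma abelAux (m : ℕ) (a : ℕ → ℝ) (f : ℕ → ℝ) :
    ∑ i ∈ Finset.Icc 1 m, a i * f i
      = (∑ i ∈ Finset.Icc 1 m, a i) * f 1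
        + ∑ k ∈ Finset.Icc 2 m, (∑ i ∈ Finset.Icc k m, a i) * (f k - f (k-1)) := by
  have step1 : ∑ i ∈ Finset.Icc 1 m, a i * f i
      = ∑ i ∈ Finset.Icc 1 m,
          (a i * f 1 + ∑ k ∈ Finset.Icc 2 i, a i * (f k - f (k-1))) := by
    apply Finset.sum_congr rfl
    intro i hi
    rw [Finset.mem_Icc] at hi
    rw [← Finset.mul_sum, telAux f i hi.1]
    ring
  rw [step1, Finset.sum_add_distrib, ← Finset.sum_mul]
  congr 1
  have step2 : ∀ i ∈ Finset.Icc 1 m, ∑ k ∈ Finset.Icc 2 i, a i * (f k - f (k-1))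
      = ∑ k ∈ Finset.Icc 2 m, if k ≤ i then a i * (f k - f (k-1)) else 0 := by
    intro i hi
    rw [Finset.mem_Icc] at hi
    rw [Finset.sum_ite, Finset.sum_const_zero, add_zero]
    apply Finset.sum_congr
    · ext k; simp only [Finset.mem_filter, Finset.mem_Icc]; omega
    · intros; rfl
  rw [Finset.sum_congr rfl step2, Finset.sum_comm]
  apply Finset.sum_congr rfl
  intro k hk
  rw [Finset.mem_Icc] at hk
  rw [Finset.sum_ite, Finset.sum_const_zero, add_zero, Finset.sum_mul]
  apply Finset.sum_congr
  · ext i; simp only [Finset.mem_filter, Finset.mem_Icc]; omega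
  · intros; rfl

end Aux

/-- Let `n ≥ 2`, let `f : {1, …, ⌊n/2⌋} → ℝ` be nondecreasing and define
`F(T) = Σ_{e ∈ E(T)} f(μ_T(e))` for trees `T` on `n` vertices. If `T ⪯ T'` then
`F(T) ≤ F(T')`; moreover if `f` is strictly increasing and `T ≺ T'` then `F(T) < F(T')`. -/
theorem stmt19 {V W : Type*} [Fintype V] [Fintype W]
    (G : SimpleGraph V) (H : SimpleGraph W) (hG : G.IsTree) (hH : H.IsTree)
    (hn : 2 ≤ Fintype.card V) (hcard : Fintype.card W = Fintype.card V)
    (f : ℕ → ℝ)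
    (hmono : ∀ i j, 1 ≤ i → i ≤ j → j ≤ Fintype.card V / 2 → f i ≤ f j) :
    (Preceq (Fintype.card V) G H → Fidx f G ≤ Fidx f H) ∧
    ((∀ i j, 1 ≤ i → i < j → j ≤ Fintype.card V / 2 → f i < f j) →
      Prec (Fintype.card V) G H → Fidx f G < Fidx f H) := by
  have hsG : ∑ i ∈ Finset.Icc 1 (Fintype.card V / 2), r G i = Fintype.card V - 1 :=
    sum_r hG
  have hsH : ∑ i ∈ Finset.Icc 1 (Fintype.card V / 2), r H i = Fintype.card V - 1 := by
    have := sum_r hH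
    rwa [hcard] at this
  have eG : Fidx f G = ((Fintype.card V - 1 : ℕ) : ℝ) * f 1
      + ∑ k ∈ Finset.Icc 2 (Fintype.card V / 2),
          (tailSum G (Fintype.card V) k : ℝ) * (f k - f (k-1)) := by
    rw [Fidx_eq hG f,
      abelAux (Fintype.card V / 2) (fun i => ((r G i : ℕ) : ℝ)) f]
    congr 1
    · rw [← hsG, Nat.cast_sum]
    · apply Finset.sum_congr rfl
      intro k _
      congr 1
      rw [tailSum, Nat.cast_sum]
  have eH : Fidx f H = ((Fintype.card V - 1 : ℕ) : ℝ) * f 1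
      + ∑ k ∈ Finset.Icc 2 (Fintype.card V / 2),
          (tailSum H (Fintype.card V) k : ℝ) * (f k - f (k-1)) := by
    have h0 := Fidx_eq hH f
    rw [hcard] at h0
    rw [h0, abelAux (Fintype.card V / 2) (fun i => ((r H i : ℕ) : ℝ)) f]
    congr 1
    · rw [← hsH, Nat.cast_sum]
    · apply Finset.sum_congr rfl
      intro k _
      congr 1
      rw [tailSum, Nat.cast_sum]
  have hle : Preceq (Fintype.card V) G H →
      ∀ k ∈ Finset.Icc 2 (Fintype.card V / 2),
        (tailSum G (Fintype.card V) k : ℝ) * (f k - f (k-1))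
          ≤ (tailSum H (Fintype.card V) k : ℝ) * (f k - f (k-1)) := by
    intro hpre k hk
    rw [Finset.mem_Icc] at hk
    have hf : 0 ≤ f k - f (k-1) :=
      sub_nonneg.mpr (hmono (k-1) k (by omega) (by omega) hk.2)
    have hT := hpre k (by omega) hk.2
    exact mul_le_mul_of_nonneg_right (by exact_mod_cast hT) hf
  constructor
  · intro hpre
    rw [eG, eH]
    exact add_le_add_right (Finset.sum_le_sum (hle hpre)) _
  · rintro hstrict ⟨hpre, k0, hk01, hk0m, hk0lt⟩
    have hk02 : 2 ≤ k0 := by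
      rcases Nat.lt_or_ge k0 2 with h | h
      · exfalso
        have hk0 : k0 = 1 := by omega
        subst hk0
        have e1 : tailSum G (Fintype.card V) 1 = Fintype.card V - 1 := hsG
        have e2 : tailSum H (Fintype.card V) 1 = Fintype.card V - 1 := hsH
        omega
      · exact h
    rw [eG, eH]
    refine add_lt_add_right (Finset.sum_lt_sum (hle hpre) ⟨k0, ?_, ?_⟩) _
    · rw [Finset.mem_Icc]; exact ⟨hk02, hk0m⟩
    · have hf : 0 < f k0 - f (k0-1) :=
        sub_pos.mpr (hstrict (k0-1) k0 (by omega) (by omega) hk0m)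
      exact mul_lt_mul_of_pos_right (by exact_mod_cast hk0lt) hf


end TreeOrder
end
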